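/- arXiv:0906.4875 — 2 statements merged into one kernel-verified Lean document; each statement's English description precedes it below -/
import Mathlib

section
/- Let X be a finite set with |X| ≥ 4 and let S be a collection of subsets of X. If there exists a fixed element x0 ∈ X such that every 4-element subset of X containing x0 belongs to Q_S, then S is phylogenetically decisive for X. -/
/-- A binary phylogenetic `X`-tree: a finite tree (connected acyclic simple graph)
whose degree-1 vertices (leaves) are in bijection with the label set `X`, and all of
whose non-leaf vertices have degree 3. -/
structure PhyloTree {α : Type} (X : Finset α) : Type 1 where
  V : Type
  fintypeV : Fintype V
  G : SimpleGraph V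
  connected : G.Connected
  acyclic : G.IsAcyclic
  leaf : α → V
  leaf_inj : ∀ x ∈ X, ∀ y ∈ X, leaf x = leaf y → x = y
  leaf_degree : ∀ x ∈ X, (G.neighborSet (leaf x)).ncard = 1
  degree_one_is_leaf : ∀ v : V, (G.neighborSet v).ncard = 1 → ∃ x ∈ X, leaf x = v
  internal_degree : ∀ v : V, (∀ x ∈ X, leaf x ≠ v) → (G.neighborSet v).ncard = 3

namespace PhyloTree

variable {α : Type} {X : Finset α}

/-- `T` resolves the quartet `{a,b,c,d}` as `ab|cd`: the (unique) path from the leaf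
labeled `a` to the leaf labeled `b` is vertex-disjoint from the path from the leaf
labeled `c` to the leaf labeled `d`. -/
def ResolvesAs (T : PhyloTree X) (a b c d : α) : Prop :=
  ∃ (p : T.G.Walk (T.leaf a) (T.leaf b)) (q : T.G.Walk (T.leaf c) (T.leaf d)),
    p.IsPath ∧ q.IsPath ∧ ∀ v ∈ p.support, v ∉ q.support

/-- Two binary phylogenetic `X`-trees are label-isomorphic. -/
def LabelIso (T T' : PhyloTree X) : Prop :=
  ∃ φ : T.G ≃g T'.G, ∀ x ∈ X, φ (T.leaf x) = T'.leaf x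

/-- `T` and `T'` resolve the 4-element subset `q` identically. -/
def ResolveIdentically [DecidableEq α] (T T' : PhyloTree X) (q : Finset α) : Prop :=
  ∀ a b c d : α, ({a, b, c, d} : Finset α) = q →
    (T.ResolvesAs a b c d ↔ T'.ResolvesAs a b c d)

/-- A cherry: a pair of leaves adjacent to the same vertex. -/
def IsCherry (T : PhyloTree X) (a b : α) : Prop :=
  ∃ v : T.V, T.G.Adj (T.leaf a) v ∧ T.G.Adj (T.leaf b) v

end PhyloTree

/-- `Q_S`: the set of all 4-element subsets contained in at least one member of `S`. -/
def QSet {α : Type} (S : Set (Finset α)) : Set (Finset α) :=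
  {q | q.card = 4 ∧ ∃ Y ∈ S, q ⊆ Y}

/-- `S` is phylogenetically decisive for `X`: any two binary phylogenetic `X`-trees
that resolve every quartet in `Q_S` identically are label-isomorphic. -/
def PhyloDecisive {α : Type} [DecidableEq α] (X : Finset α) (S : Set (Finset α)) : Prop :=
  ∀ T T' : PhyloTree X,
    (∀ q ∈ QSet S, PhyloTree.ResolveIdentically T T' q) → PhyloTree.LabelIso T T'

/-- `S` satisfies the four-way partition property for `X`. -/
def FourWayPartitionProperty {α : Type} [DecidableEq α] (X : Finset α)
    (S : Set (Finset α)) : Prop :=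
  ∀ A1 A2 A3 A4 : Finset α,
    A1.Nonempty → A2.Nonempty → A3.Nonempty → A4.Nonempty →
    Disjoint A1 A2 → Disjoint A1 A3 → Disjoint A1 A4 →
    Disjoint A2 A3 → Disjoint A2 A4 → Disjoint A3 A4 →
    A1 ∪ A2 ∪ A3 ∪ A4 = X →
    ∃ a1 ∈ A1, ∃ a2 ∈ A2, ∃ a3 ∈ A3, ∃ a4 ∈ A4,
      ({a1, a2, a3, a4} : Finset α) ∈ QSet S

/-- `S` is decisive for the particular tree `T`. -/
def DecisiveFor {α : Type} [DecidableEq α] {X : Finset α} (S : Set (Finset α))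
    (T : PhyloTree X) : Prop :=
  ∀ T' : PhyloTree X,
    (∀ q ∈ QSet S, PhyloTree.ResolveIdentically T T' q) → PhyloTree.LabelIso T T'

namespace PhyloTree

open SimpleGraph

variable {α : Type} {X : Finset α}

instance (T : PhyloTree X) : Fintype T.V := T.fintypeV

noncomputable instance (T : PhyloTree X) : DecidableEq T.V := Classical.decEq _

lemma isTree (T : PhyloTree X) : T.G.IsTree :=
  (SimpleGraph.isTree_iff (G := T.G)).mpr ⟨T.connected, T.acyclic⟩

variable (T : PhyloTree X)

lemma dcomm (u v : T.V) : T.G.dist u v = T.G.dist v u := SimpleGraph.dist_comm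

noncomputable def pth (u v : T.V) : T.G.Walk u v :=
  (T.isTree.existsUnique_path u v).choose

lemma pth_isPath (u v : T.V) : (T.pth u v).IsPath :=
  (T.isTree.existsUnique_path u v).choose_spec.1

lemma pth_eq {u v : T.V} (p : T.G.Walk u v) (hp : p.IsPath) : p = T.pth u v :=
  (T.isTree.existsUnique_path u v).choose_spec.2 p hp

lemma pth_length (u v : T.V) : (T.pth u v).length = T.G.dist u v := by
  obtain ⟨p, hp, hl⟩ := (T.connected u v).exists_path_of_dist
  rw [T.pth_eq p hp] at hl; exact hl

/-- metric betweenness -/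
def Btw (u m v : T.V) : Prop := T.G.dist u m + T.G.dist m v = T.G.dist u v

lemma btw_iff_mem {u m v : T.V} : T.Btw u m v ↔ m ∈ (T.pth u v).support := by
  constructor
  · intro h
    have hW : ((T.pth u m).append (T.pth m v)).length = T.G.dist u v := by
      rw [SimpleGraph.Walk.length_append, T.pth_length, T.pth_length]; exact h
    have hP : ((T.pth u m).append (T.pth m v)).IsPath :=
      SimpleGraph.Walk.isPath_of_length_eq_dist _ hW
    have := T.pth_eq _ hP
    rw [← this]
    exact (SimpleGraph.Walk.mem_support_append_iff _ _).2 (Or.inr (SimpleGraph.Walk.start_mem_support _))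
  · intro h
    have hsp := SimpleGraph.Walk.take_spec (T.pth u v) h
    have hlen : ((T.pth u v).takeUntil m h).length + ((T.pth u v).dropUntil m h).length
        = T.G.dist u v := by
      rw [← T.pth_length u v]
      conv_rhs => rw [← hsp]
      rw [SimpleGraph.Walk.length_append]
    have h1 : T.G.dist u m ≤ ((T.pth u v).takeUntil m h).length := SimpleGraph.dist_le _
    have h2 : T.G.dist m v ≤ ((T.pth u v).dropUntil m h).length := SimpleGraph.dist_le _
    have h3 : T.G.dist u v ≤ T.G.dist u m + T.G.dist m v := T.connected.dist_triangle
    unfold Btw; omega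

lemma btw_self_left (u v : T.V) : T.Btw u u v := by
  unfold Btw; simp

lemma btw_self_right (u v : T.V) : T.Btw u v v := by
  unfold Btw; simp

lemma btw_symm {u m v : T.V} (h : T.Btw u m v) : T.Btw v m u := by
  unfold Btw at *
  rw [T.dcomm v m, T.dcomm m u, T.dcomm v u]; omega

lemma dist_eq_zero {u v : T.V} (h : T.G.dist u v = 0) : u = v :=
  T.connected.dist_eq_zero_iff.1 h

lemma btw_eq_left {u m : T.V} (h : T.Btw u m u) : m = u := by
  unfold Btw at h
  simp only [SimpleGraph.dist_self] at h
  have h2 := T.dcomm u m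
  exact T.dist_eq_zero (show T.G.dist m u = 0 by omega)

/-- comparability of two points on a path -/
lemma btw_compare {u v y z : T.V} (hy : T.Btw u y v) (hz : T.Btw u z v) :
    T.Btw u y z ∨ T.Btw u z y := by
  have hy' := T.btw_iff_mem.1 hy
  have hsp := SimpleGraph.Walk.take_spec (T.pth u v) hy'
  have hz' := T.btw_iff_mem.1 hz
  rw [← hsp] at hz'
  rcases (SimpleGraph.Walk.mem_support_append_iff _ _).1 hz' with h | h
  · right
    have htp : ((T.pth u v).takeUntil y hy').IsPath := (T.pth_isPath u v).takeUntil hy'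
    rw [T.pth_eq _ htp] at h
    exact T.btw_iff_mem.2 h
  · left
    have htp : ((T.pth u v).dropUntil y hy').IsPath := (T.pth_isPath u v).dropUntil hy'
    rw [T.pth_eq _ htp] at h
    have hyzv := T.btw_iff_mem.2 h
    unfold Btw at *
    have t1 : T.G.dist u z ≤ T.G.dist u y + T.G.dist y z := T.connected.dist_triangle
    have t2 : T.G.dist u v ≤ T.G.dist u z + T.G.dist z v := T.connected.dist_triangle
    omega

lemma btw_unique_dist {u v y z : T.V} (hy : T.Btw u y v) (hz : T.Btw u z v)
    (hd : T.G.dist u y = T.G.dist u z) : y = z := by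
  rcases T.btw_compare hy hz with h | h
  · unfold Btw at h
    exact T.dist_eq_zero (by omega)
  · exact (T.dist_eq_zero (show T.G.dist z y = 0 by unfold Btw at h; omega)).symm


lemma adj_dist_one {u x : T.V} (h : T.G.Adj u x) : T.G.dist u x = 1 :=
  (SimpleGraph.dist_eq_one_iff_adj).2 h

lemma exists_step {u v : T.V} (huv : u ≠ v) :
    ∃ n, T.G.Adj u n ∧ T.G.dist n v + 1 = T.G.dist u v := by
  obtain ⟨p, hp, hl⟩ := (T.connected u v).exists_path_of_dist
  cases p with
  | nil => exact absurd rfl huv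
  | @cons _ n _ hadj q =>
    refine ⟨n, hadj, ?_⟩
    have h1 : T.G.dist n v ≤ q.length := SimpleGraph.dist_le _
    have h2 : T.G.dist u v ≤ T.G.dist u n + T.G.dist n v := T.connected.dist_triangle
    have h3 : T.G.dist u n = 1 := T.adj_dist_one hadj
    simp only [SimpleGraph.Walk.length_cons] at hl
    omega

def IsMed (m u v w : T.V) : Prop := T.Btw u m v ∧ T.Btw u m w ∧ T.Btw v m w

lemma exists_med (u v w : T.V) : ∃ m, T.IsMed m u v w := by
  generalize hn : T.G.dist u v = n
  induction n using Nat.strong_induction_on generalizing u v with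
  | _ n ih =>
  by_cases huv : u = v
  · subst huv
    exact ⟨u, T.btw_self_left u u, T.btw_self_left u w, T.btw_self_left u w⟩
  · obtain ⟨x, hadj, hx⟩ := T.exists_step huv
    have hux : T.G.dist u x = 1 := T.adj_dist_one hadj
    by_cases hc : T.G.dist x w < T.G.dist u w
    · obtain ⟨m, h1, h2, h3⟩ := ih (T.G.dist x v) (by omega) x v rfl
      have hduw : T.G.dist u w ≤ T.G.dist u x + T.G.dist x w := T.connected.dist_triangle
      have t1 : T.G.dist u m ≤ T.G.dist u x + T.G.dist x m := T.connected.dist_triangle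
      have t2 : T.G.dist u v ≤ T.G.dist u m + T.G.dist m v := T.connected.dist_triangle
      have t3 : T.G.dist u w ≤ T.G.dist u m + T.G.dist m w := T.connected.dist_triangle
      refine ⟨m, ?_, ?_, h3⟩ <;> · unfold Btw at h1 h2 h3 ⊢; omega
    · -- u is the median
      have hxw : ¬ x ∈ (T.pth u w).support := by
        intro hmem
        have := T.btw_iff_mem.2 hmem
        unfold Btw at this; omega
      have hdisj : ∀ y ∈ (T.pth v u).support, y ∈ (T.pth u w).support → y = u := by
        intro y hy hyw
        have hvyu : T.Btw v y u := T.btw_iff_mem.2 hy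
        have hbyw : T.Btw u y w := T.btw_iff_mem.2 hyw
        have hvxu : T.Btw v x u := by
          unfold Btw
          rw [T.dcomm v x, T.dcomm x u, T.dcomm v u]; omega
        rcases T.btw_compare hvyu hvxu with hyx | hxy
        · -- Btw v y x
          exfalso
          unfold Btw at hvyu hbyw hvxu hyx
          have t : T.G.dist x w ≤ T.G.dist x y + T.G.dist y w := T.connected.dist_triangle
          have c1 := T.dcomm x y
          have c2 := T.dcomm u y
          have c3 := T.dcomm x u
          omega
        · -- Btw v x y
          unfold Btw at hvyu hvxu hxy
          have c3 := T.dcomm x u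
          have hxy1 : T.G.dist x y + T.G.dist y u = 1 := by omega
          rcases Nat.eq_zero_or_pos (T.G.dist x y) with h0 | hpos
          · exfalso; exact hxw ((T.dist_eq_zero h0) ▸ hyw)
          · exact T.dist_eq_zero (by omega)
      refine ⟨u, T.btw_self_left u v, T.btw_self_left u w, ?_⟩
      have hW : ((T.pth v u).append (T.pth u w)).IsPath := by
        rw [SimpleGraph.Walk.isPath_def, SimpleGraph.Walk.support_append]
        refine List.Nodup.append ((T.pth_isPath v u).support_nodup)
          (((T.pth_isPath u w).support_nodup).tail) ?_
        intro y hy hyt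
        have hyw : y ∈ (T.pth u w).support := List.mem_of_mem_tail hyt
        have hyu := hdisj y hy hyw
        rw [hyu] at hyt
        have := (T.pth_isPath u w).support_nodup
        rw [SimpleGraph.Walk.support_eq_cons] at this
        exact (List.nodup_cons.1 this).1 hyt
      have heq := T.pth_eq _ hW
      have hlen : T.G.dist v u + T.G.dist u w = T.G.dist v w := by
        have := T.pth_length v w
        rw [← heq] at this
        rw [SimpleGraph.Walk.length_append, T.pth_length, T.pth_length] at this
        exact this
      exact hlen

lemma isMed_unique {m m' u v w : T.V} (h : T.IsMed m u v w) (h' : T.IsMed m' u v w) :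
    m = m' := by
  obtain ⟨h1, h2, h3⟩ := h
  obtain ⟨h1', h2', h3'⟩ := h'
  refine T.btw_unique_dist h1 h1' ?_
  unfold Btw at *
  have c1 := T.dcomm u m; have c2 := T.dcomm v m; have c3 := T.dcomm w m
  have c1' := T.dcomm u m'; have c2' := T.dcomm v m'; have c3' := T.dcomm w m'
  omega

noncomputable def med (u v w : T.V) : T.V := (T.exists_med u v w).choose

lemma med_spec (u v w : T.V) : T.IsMed (T.med u v w) u v w := (T.exists_med u v w).choose_spec

lemma eq_med {m u v w : T.V} (h : T.IsMed m u v w) : m = T.med u v w :=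
  T.isMed_unique h (T.med_spec u v w)

lemma isMed_swap12 {m u v w : T.V} (h : T.IsMed m u v w) : T.IsMed m v u w :=
  ⟨(T.btw_symm h.1), h.2.2, h.2.1⟩

lemma isMed_swap23 {m u v w : T.V} (h : T.IsMed m u v w) : T.IsMed m u w v :=
  ⟨h.2.1, h.1, (T.btw_symm h.2.2)⟩

lemma isMed_rot {m u v w : T.V} (h : T.IsMed m u v w) : T.IsMed m v w u :=
  (T.isMed_swap23 (T.isMed_swap12 h))

lemma med_self_left (u w : T.V) : T.med u u w = u :=
  (T.eq_med ⟨T.btw_self_left u u, T.btw_self_left u w, T.btw_self_left u w⟩).symm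

lemma med_self_mid (u v : T.V) : T.med u v u = u :=
  (T.eq_med ⟨T.btw_self_left u v, T.btw_self_left u u, T.btw_self_right v u⟩).symm

lemma med_self_right (u v : T.V) : T.med u v v = v :=
  (T.eq_med ⟨T.btw_self_right u v, T.btw_self_right u v, T.btw_self_left v v⟩).symm

/-- projection: for `y` on the path `u v`, the path from `c` reaches it through the
median of `u v c`. -/
lemma proj {m u v c y : T.V} (h : T.IsMed m u v c) (hy : T.Btw u y v) : T.Btw c m y := by
  obtain ⟨h1, h2, h3⟩ := h
  rcases T.btw_compare hy h1 with hym | hmy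
  · -- Btw u y m
    unfold Btw at *
    have t1 : T.G.dist c y ≤ T.G.dist c m + T.G.dist m y := T.connected.dist_triangle
    have t2 : T.G.dist c u ≤ T.G.dist c y + T.G.dist y u := T.connected.dist_triangle
    have c1 := T.dcomm c u; have c2 := T.dcomm c m; have c3 := T.dcomm m u
    have c4 := T.dcomm y u; have c5 := T.dcomm m y
    omega
  · -- Btw u m y hence Btw m y v
    unfold Btw at *
    have t1 : T.G.dist c y ≤ T.G.dist c m + T.G.dist m y := T.connected.dist_triangle
    have t2 : T.G.dist c v ≤ T.G.dist c y + T.G.dist y v := T.connected.dist_triangle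
    have c1 := T.dcomm c v; have c2 := T.dcomm c m; have c3 := T.dcomm m v
    have c4 := T.dcomm m y
    omega

/-- two distinct projections onto the same path -/
lemma proj2 {m m' u v c e : T.V} (hc : T.IsMed m u v c) (he : T.IsMed m' u v e)
    (hne : m ≠ m') (hor : T.Btw u m m') :
    T.Btw c m e ∧ T.Btw c m' e := by
  have hem'm : T.Btw e m' m := T.proj he hc.1
  obtain ⟨z, hz1, hz2, hz3⟩ := T.exists_med c e m
  have hcmm' : T.Btw c m m' := T.proj hc he.1
  have hzm : z = m := by
    rcases T.btw_compare (u := e) (v := m) hz3 hem'm with hezm' | hem'z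
    · -- Btw e z m' : impossible
      exfalso
      unfold Btw at hz1 hz2 hz3 hem'm hezm' hcmm'
      have t1 : T.G.dist c m' ≤ T.G.dist c z + T.G.dist z m' := T.connected.dist_triangle
      have c1 := T.dcomm z m; have c2 := T.dcomm m' m; have c3 := T.dcomm z m'
      exact hne (T.dist_eq_zero (show T.G.dist m m' = 0 by omega))
    · -- Btw e m' z, so z between m' and m, hence on the path u v
      have hm'zm : T.Btw m' z m := by unfold Btw at *; omega
      have hmm'v : T.Btw m m' v := by
        have h1 := hc.1; have h2 := he.1
        unfold Btw at *; omega
      have hmzv : T.Btw m z v := by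
        have t1 : T.G.dist z v ≤ T.G.dist z m' + T.G.dist m' v := T.connected.dist_triangle
        have t2 : T.G.dist m v ≤ T.G.dist m z + T.G.dist z v := T.connected.dist_triangle
        have c1 := T.dcomm m' z; have c2 := T.dcomm m z; have c3 := T.dcomm m' m
        unfold Btw at *; omega
      have huzv : T.Btw u z v := by
        have h1 := hc.1
        have t1 : T.G.dist u z ≤ T.G.dist u m + T.G.dist m z := T.connected.dist_triangle
        have t2 : T.G.dist u v ≤ T.G.dist u z + T.G.dist z v := T.connected.dist_triangle
        unfold Btw at *; omega
      have hcmz := T.proj hc huzv  -- Btw c m z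
      unfold Btw at hcmz hz2
      have c1 := T.dcomm z m
      exact T.dist_eq_zero (show T.G.dist z m = 0 by omega)
  rw [hzm] at hz1
  constructor
  · exact hz1
  · -- Btw c m' e
    unfold Btw at hz1 hcmm' hem'm ⊢
    have c1 := T.dcomm m' e; have c2 := T.dcomm m e; have c3 := T.dcomm m' m
    omega


/-! ### directions (first step of a path) -/

lemma exists_dir {u w : T.V} (h : u ≠ w) :
    ∃! n, T.G.Adj u n ∧ T.G.dist n w + 1 = T.G.dist u w := by
  obtain ⟨n, hadj, hd⟩ := T.exists_step h
  refine ⟨n, ⟨hadj, hd⟩, ?_⟩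
  rintro n' ⟨hadj', hd'⟩
  have b1 : T.Btw u n' w := by
    unfold Btw; rw [T.adj_dist_one hadj']; omega
  have b2 : T.Btw u n w := by
    unfold Btw; rw [T.adj_dist_one hadj]; omega
  exact T.btw_unique_dist b1 b2 (by rw [T.adj_dist_one hadj', T.adj_dist_one hadj])

noncomputable def dir (u w : T.V) : T.V :=
  if h : u = w then u else (T.exists_dir h).choose

lemma dir_spec {u w : T.V} (h : u ≠ w) :
    T.G.Adj u (T.dir u w) ∧ T.G.dist (T.dir u w) w + 1 = T.G.dist u w := by
  rw [dir, dif_neg h]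
  exact (T.exists_dir h).choose_spec.1

lemma dir_adj {u w : T.V} (h : u ≠ w) : T.G.Adj u (T.dir u w) := (T.dir_spec h).1

lemma dir_eq {u w n : T.V} (hadj : T.G.Adj u n) (hd : T.G.dist n w + 1 = T.G.dist u w) :
    n = T.dir u w := by
  have huw : u ≠ w := by
    intro he; subst he; rw [SimpleGraph.dist_self] at hd; omega
  rw [dir, dif_neg huw]
  exact (T.exists_dir huw).choose_spec.2 n ⟨hadj, hd⟩

/-- if `z` lies between `u` and `w` then the direction from `u` to `z` equals that to `w`. -/
lemma dir_of_btw {u z w : T.V} (h : T.Btw u z w) (hz : z ≠ u) : T.dir u z = T.dir u w := by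
  have huz : u ≠ z := Ne.symm hz
  obtain ⟨hadj, hd⟩ := T.dir_spec huz
  refine T.dir_eq hadj ?_
  unfold Btw at h
  have t1 : T.G.dist (T.dir u z) w ≤ T.G.dist (T.dir u z) z + T.G.dist z w :=
    T.connected.dist_triangle
  have t2 : T.G.dist u w ≤ T.G.dist u (T.dir u z) + T.G.dist (T.dir u z) w :=
    T.connected.dist_triangle
  have h3 : T.G.dist u (T.dir u z) = 1 := T.adj_dist_one hadj
  omega

lemma dir_ne {p u q : T.V} (h : T.Btw p u q) (hp : p ≠ u) (hq : q ≠ u) :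
    T.dir u p ≠ T.dir u q := by
  intro he
  obtain ⟨hadj1, hd1⟩ := T.dir_spec (Ne.symm hp)
  obtain ⟨hadj2, hd2⟩ := T.dir_spec (Ne.symm hq)
  rw [he] at hd1
  have t : T.G.dist p q ≤ T.G.dist p (T.dir u q) + T.G.dist (T.dir u q) q :=
    T.connected.dist_triangle
  have c1 := T.dcomm p (T.dir u q)
  unfold Btw at h
  have hp1 : T.G.dist p u ≥ 1 := by
    rcases Nat.eq_zero_or_pos (T.G.dist p u) with h0 | h0
    · exact absurd (T.dist_eq_zero h0) hp
    · omega
  have hq1 : T.G.dist u q ≥ 1 := by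
    rcases Nat.eq_zero_or_pos (T.G.dist u q) with h0 | h0
    · exact absurd (T.dist_eq_zero h0).symm hq
    · omega
  have c2 := T.dcomm p u
  omega

lemma btw_of_dir_ne {p u q : T.V} (hp : p ≠ u) (hq : q ≠ u)
    (h : T.dir u p ≠ T.dir u q) : T.Btw p u q := by
  obtain ⟨z, hz1, hz2, hz3⟩ := T.exists_med p q u
  by_cases hzu : z = u
  · rw [hzu] at hz1; exact hz1
  · exfalso
    apply h
    rw [← T.dir_of_btw (T.btw_symm hz2) hzu, ← T.dir_of_btw (T.btw_symm hz3) hzu]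

/-! ### degree facts -/

lemma leaf_unique_nbr {x : α} (hx : x ∈ X) {n n' : T.V}
    (h1 : T.G.Adj (T.leaf x) n) (h2 : T.G.Adj (T.leaf x) n') : n = n' := by
  have hcard := T.leaf_degree x hx
  obtain ⟨a, ha⟩ := Set.ncard_eq_one.1 hcard
  have e1 : n ∈ T.G.neighborSet (T.leaf x) := h1
  have e2 : n' ∈ T.G.neighborSet (T.leaf x) := h2
  rw [ha] at e1 e2
  simp at e1 e2; rw [e1, e2]

lemma not_leaf_of_two_nbrs {v n n' : T.V} (h1 : T.G.Adj v n) (h2 : T.G.Adj v n')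
    (hne : n ≠ n') : ∀ x ∈ X, T.leaf x ≠ v := by
  intro x hx he
  exact hne (T.leaf_unique_nbr hx (he ▸ h1) (he ▸ h2))

lemma leaf_not_interior {x : α} (hx : x ∈ X) {p q : T.V}
    (hp : p ≠ T.leaf x) (hq : q ≠ T.leaf x) (h : T.Btw p (T.leaf x) q) : False := by
  have hd := T.dir_ne h hp hq
  exact T.not_leaf_of_two_nbrs (T.dir_adj (Ne.symm hp)) (T.dir_adj (Ne.symm hq)) hd x hx rfl

lemma internal_of_btw {p v q : T.V} (h : T.Btw p v q) (hp : p ≠ v) (hq : q ≠ v) :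
    ∀ x ∈ X, T.leaf x ≠ v :=
  T.not_leaf_of_two_nbrs (T.dir_adj (Ne.symm hp)) (T.dir_adj (Ne.symm hq)) (T.dir_ne h hp hq)

lemma deg4 {A B C D m : T.V}
    (h1 : T.Btw A m B) (h2 : T.Btw A m C) (h3 : T.Btw A m D)
    (h4 : T.Btw B m C) (h5 : T.Btw B m D) (h6 : T.Btw C m D)
    (nA : A ≠ m) (nB : B ≠ m) (nC : C ≠ m) (nD : D ≠ m) : False := by
  have hint : ∀ x ∈ X, T.leaf x ≠ m := T.internal_of_btw h1 nA nB
  have hcard := T.internal_degree m hint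
  have d12 : T.dir m A ≠ T.dir m B := T.dir_ne h1 nA nB
  have d13 : T.dir m A ≠ T.dir m C := T.dir_ne h2 nA nC
  have d14 : T.dir m A ≠ T.dir m D := T.dir_ne h3 nA nD
  have d23 : T.dir m B ≠ T.dir m C := T.dir_ne h4 nB nC
  have d24 : T.dir m B ≠ T.dir m D := T.dir_ne h5 nB nD
  have d34 : T.dir m C ≠ T.dir m D := T.dir_ne h6 nC nD
  have hsub : ({T.dir m A, T.dir m B, T.dir m C, T.dir m D} : Set T.V) ⊆ T.G.neighborSet m := by
    intro y hy
    simp only [Set.mem_insert_iff, Set.mem_singleton_iff] at hy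
    rcases hy with h | h | h | h <;> subst h
    · exact T.dir_adj (Ne.symm nA)
    · exact T.dir_adj (Ne.symm nB)
    · exact T.dir_adj (Ne.symm nC)
    · exact T.dir_adj (Ne.symm nD)
  have hle := Set.ncard_le_ncard hsub (Set.toFinite _)
  have h4c : ({T.dir m A, T.dir m B, T.dir m C, T.dir m D} : Set T.V).ncard = 4 := by
    rw [Set.ncard_insert_of_notMem (by simp [d12, d13, d14]) (Set.toFinite _),
        Set.ncard_insert_of_notMem (by simp [d23, d24]) (Set.toFinite _),
        Set.ncard_insert_of_notMem (by simp [d34]) (Set.toFinite _),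
        Set.ncard_singleton]
  omega

/-- every neighbor of an internal vertex with three known distinct neighbors is one of them -/
lemma nbr_cases {m n1 n2 n3 n : T.V} (hint : ∀ x ∈ X, T.leaf x ≠ m)
    (h1 : T.G.Adj m n1) (h2 : T.G.Adj m n2) (h3 : T.G.Adj m n3)
    (d12 : n1 ≠ n2) (d13 : n1 ≠ n3) (d23 : n2 ≠ n3) (hn : T.G.Adj m n) :
    n = n1 ∨ n = n2 ∨ n = n3 := by
  have hcard := T.internal_degree m hint
  have hsub : ({n1, n2, n3} : Set T.V) ⊆ T.G.neighborSet m := by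
    intro y hy
    simp only [Set.mem_insert_iff, Set.mem_singleton_iff] at hy
    rcases hy with h | h | h <;> subst h <;> assumption
  have h3c : ({n1, n2, n3} : Set T.V).ncard = 3 := by
    rw [Set.ncard_insert_of_notMem (by simp [d12, d13]) (Set.toFinite _),
        Set.ncard_insert_of_notMem (by simp [d23]) (Set.toFinite _),
        Set.ncard_singleton]
  have := Set.eq_of_subset_of_ncard_le hsub (by omega) (Set.toFinite _)
  have hn' : n ∈ T.G.neighborSet m := hn
  rw [← this] at hn'
  simpa using hn'

lemma leaf_ne {a b : α} (ha : a ∈ X) (hb : b ∈ X) (hab : a ≠ b) : T.leaf a ≠ T.leaf b :=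
  fun he => hab (T.leaf_inj a ha b hb he)

/-! ### the median of three distinct leaves is internal -/

lemma med_leaves_internal {a b c : α} (ha : a ∈ X) (hb : b ∈ X) (hc : c ∈ X)
    (hab : a ≠ b) (hac : a ≠ c) (hbc : b ≠ c) :
    ∀ x ∈ X, T.leaf x ≠ T.med (T.leaf a) (T.leaf b) (T.leaf c) := by
  obtain ⟨m1, m2, m3⟩ := T.med_spec (T.leaf a) (T.leaf b) (T.leaf c)
  set m := T.med (T.leaf a) (T.leaf b) (T.leaf c)
  by_cases hA : T.leaf a = m
  · exfalso
    exact T.leaf_not_interior ha (T.leaf_ne hb ha (Ne.symm hab))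
      (T.leaf_ne hc ha (Ne.symm hac)) (hA ▸ m3)
  · by_cases hB : T.leaf b = m
    · exfalso
      exact T.leaf_not_interior hb (T.leaf_ne ha hb hab)
        (T.leaf_ne hc hb (Ne.symm hbc)) (hB ▸ m2)
    · exact T.internal_of_btw m1 hA hB


/-! ### quartets -/

lemma resolves_pths {a b c d : α} (h : T.ResolvesAs a b c d) :
    ∀ v ∈ (T.pth (T.leaf a) (T.leaf b)).support, v ∉ (T.pth (T.leaf c) (T.leaf d)).support := by
  obtain ⟨p, q, hp, hq, hdisj⟩ := h
  rw [T.pth_eq p hp, T.pth_eq q hq] at hdisj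
  exact hdisj

lemma resolves_swap_left {a b c d : α} (h : T.ResolvesAs a b c d) : T.ResolvesAs b a c d := by
  obtain ⟨p, q, hp, hq, hdisj⟩ := h
  exact ⟨p.reverse, q, hp.reverse, hq, fun v hv => hdisj v
    (by rwa [SimpleGraph.Walk.support_reverse, List.mem_reverse] at hv)⟩

lemma resolves_swap_right {a b c d : α} (h : T.ResolvesAs a b c d) : T.ResolvesAs a b d c := by
  obtain ⟨p, q, hp, hq, hdisj⟩ := h
  refine ⟨p, q.reverse, hp, hq.reverse, fun v hv hv2 => hdisj v hv ?_⟩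
  rwa [SimpleGraph.Walk.support_reverse, List.mem_reverse] at hv2

lemma resolves_swap_pairs {a b c d : α} (h : T.ResolvesAs a b c d) : T.ResolvesAs c d a b := by
  obtain ⟨p, q, hp, hq, hdisj⟩ := h
  exact ⟨q, p, hq, hp, fun v hv hvp => hdisj v hvp hv⟩

lemma med_eq_of_resolves {a b c d : α} (ha : a ∈ X) (hb : b ∈ X) (hc : c ∈ X) (hd : d ∈ X)
    (h : T.ResolvesAs a b c d) :
    T.med (T.leaf a) (T.leaf b) (T.leaf c) = T.med (T.leaf a) (T.leaf b) (T.leaf d) := by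
  by_contra hne
  have s1 := T.med_spec (T.leaf a) (T.leaf b) (T.leaf c)
  have s2 := T.med_spec (T.leaf a) (T.leaf b) (T.leaf d)
  rcases T.btw_compare s1.1 s2.1 with h1 | h2
  · have hCD := (T.proj2 s1 s2 hne h1).1
    exact T.resolves_pths h _ (T.btw_iff_mem.1 s1.1) (T.btw_iff_mem.1 hCD)
  · have hDC := (T.proj2 s2 s1 (Ne.symm hne) h2).1
    exact T.resolves_pths h _ (T.btw_iff_mem.1 s2.1) (T.btw_iff_mem.1 (T.btw_symm hDC))

lemma resolves_of_med_eq {a b c d : α} (ha : a ∈ X) (hb : b ∈ X) (hc : c ∈ X) (hd : d ∈ X)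
    (hab : a ≠ b) (hac : a ≠ c) (had : a ≠ d) (hbc : b ≠ c) (hbd : b ≠ d) (hcd : c ≠ d)
    (h : T.med (T.leaf a) (T.leaf b) (T.leaf c) = T.med (T.leaf a) (T.leaf b) (T.leaf d)) :
    T.ResolvesAs a b c d := by
  have s1 := T.med_spec (T.leaf a) (T.leaf b) (T.leaf c)
  have s2 := T.med_spec (T.leaf a) (T.leaf b) (T.leaf d)
  rw [← h] at s2
  set m := T.med (T.leaf a) (T.leaf b) (T.leaf c) with hm
  have hint := T.med_leaves_internal ha hb hc hab hac hbc
  refine ⟨T.pth (T.leaf a) (T.leaf b), T.pth (T.leaf c) (T.leaf d),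
    T.pth_isPath _ _, T.pth_isPath _ _, ?_⟩
  intro y hyAB hyCD
  have hAyB : T.Btw (T.leaf a) y (T.leaf b) := T.btw_iff_mem.2 hyAB
  have hCyD : T.Btw (T.leaf c) y (T.leaf d) := T.btw_iff_mem.2 hyCD
  have hCy : T.Btw (T.leaf c) m y := T.proj s1 hAyB
  have hDy : T.Btw (T.leaf d) m y := T.proj s2 hAyB
  have hCmD : T.Btw (T.leaf c) m (T.leaf d) := by
    have t : T.G.dist (T.leaf c) (T.leaf d) ≤
        T.G.dist (T.leaf c) m + T.G.dist m (T.leaf d) := T.connected.dist_triangle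
    have c1 := T.dcomm (T.leaf d) m
    have c2 := T.dcomm y (T.leaf d)
    have c3 := T.dcomm m y
    unfold Btw at *; omega
  exact T.deg4 s1.1 s1.2.1 s2.2.1 s1.2.2 s2.2.2 hCmD
    (hint a ha) (hint b hb) (hint c hc) (hint d hd)

lemma resolves_iff_med {a b c d : α} (ha : a ∈ X) (hb : b ∈ X) (hc : c ∈ X) (hd : d ∈ X)
    (hab : a ≠ b) (hac : a ≠ c) (had : a ≠ d) (hbc : b ≠ c) (hbd : b ≠ d) (hcd : c ≠ d) :
    T.ResolvesAs a b c d ↔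
      T.med (T.leaf a) (T.leaf b) (T.leaf c) = T.med (T.leaf a) (T.leaf b) (T.leaf d) :=
  ⟨T.med_eq_of_resolves ha hb hc hd,
   T.resolves_of_med_eq ha hb hc hd hab hac had hbc hbd hcd⟩

lemma resolves_of_order {a b c d : α} (ha : a ∈ X) (hb : b ∈ X) (hc : c ∈ X) (hd : d ∈ X)
    (hab : a ≠ b) (hac : a ≠ c) (had : a ≠ d) (hbc : b ≠ c) (hbd : b ≠ d) (hcd : c ≠ d)
    (hne : T.med (T.leaf a) (T.leaf b) (T.leaf c) ≠ T.med (T.leaf a) (T.leaf b) (T.leaf d))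
    (hord : T.Btw (T.leaf a) (T.med (T.leaf a) (T.leaf b) (T.leaf c))
      (T.med (T.leaf a) (T.leaf b) (T.leaf d))) :
    T.ResolvesAs a c b d := by
  have s1 := T.med_spec (T.leaf a) (T.leaf b) (T.leaf c)
  have s2 := T.med_spec (T.leaf a) (T.leaf b) (T.leaf d)
  set m := T.med (T.leaf a) (T.leaf b) (T.leaf c) with hmdef
  set m' := T.med (T.leaf a) (T.leaf b) (T.leaf d) with hmdef'
  have hDm : T.Btw (T.leaf d) m' m := T.proj s2 s1.1
  have hAmD : T.Btw (T.leaf a) m (T.leaf d) := by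
    have h1 := hord; have h2 := s2.2.1; have h3 := hDm
    have c1 := T.dcomm (T.leaf d) m'
    have c2 := T.dcomm (T.leaf d) m
    have c3 := T.dcomm m' m
    unfold Btw at *; omega
  have hCmD : T.Btw (T.leaf c) m (T.leaf d) := (T.proj2 s1 s2 hne hord).1
  have hMacb : T.IsMed m (T.leaf a) (T.leaf c) (T.leaf b) := T.isMed_swap23 s1
  have hMacd : T.IsMed m (T.leaf a) (T.leaf c) (T.leaf d) := ⟨s1.2.1, hAmD, hCmD⟩
  refine T.resolves_of_med_eq ha hc hb hd hac hab had (Ne.symm hbc) hcd hbd ?_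
  rw [← T.eq_med hMacb, ← T.eq_med hMacd]

lemma resolves_total {a b c d : α} (ha : a ∈ X) (hb : b ∈ X) (hc : c ∈ X) (hd : d ∈ X)
    (hab : a ≠ b) (hac : a ≠ c) (had : a ≠ d) (hbc : b ≠ c) (hbd : b ≠ d) (hcd : c ≠ d) :
    T.ResolvesAs a b c d ∨ T.ResolvesAs a c b d ∨ T.ResolvesAs a d b c := by
  by_cases heq : T.med (T.leaf a) (T.leaf b) (T.leaf c) = T.med (T.leaf a) (T.leaf b) (T.leaf d)
  · exact Or.inl (T.resolves_of_med_eq ha hb hc hd hab hac had hbc hbd hcd heq)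
  · rcases T.btw_compare (T.med_spec (T.leaf a) (T.leaf b) (T.leaf c)).1
      (T.med_spec (T.leaf a) (T.leaf b) (T.leaf d)).1 with h1 | h2
    · exact Or.inr (Or.inl (T.resolves_of_order ha hb hc hd hab hac had hbc hbd hcd heq h1))
    · exact Or.inr (Or.inr (T.resolves_of_order ha hb hd hc hab had hac hbd hbc
        (Ne.symm hcd) (Ne.symm heq) h2))

lemma resolves_excl {a b c d : α} (ha : a ∈ X) (hb : b ∈ X) (hc : c ∈ X) (hd : d ∈ X)
    (hab : a ≠ b) (hac : a ≠ c) (had : a ≠ d) (hbc : b ≠ c) (hbd : b ≠ d) (hcd : c ≠ d)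
    (h1 : T.ResolvesAs a b c d) (h2 : T.ResolvesAs a c b d) : False := by
  have e1 := T.med_eq_of_resolves ha hb hc hd h1
  have e2 := T.med_eq_of_resolves ha hc hb hd h2
  have s1 := T.med_spec (T.leaf a) (T.leaf b) (T.leaf c)
  set m := T.med (T.leaf a) (T.leaf b) (T.leaf c) with hmdef
  have hACB : T.med (T.leaf a) (T.leaf c) (T.leaf b) = m := (T.eq_med (T.isMed_swap23 s1)).symm
  rw [hACB] at e2
  have sACD := T.med_spec (T.leaf a) (T.leaf c) (T.leaf d)
  rw [← e2] at sACD
  have sABD := T.med_spec (T.leaf a) (T.leaf b) (T.leaf d)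
  rw [← e1] at sABD
  have hint := T.med_leaves_internal ha hb hc hab hac hbc
  exact T.deg4 s1.1 s1.2.1 sABD.2.1 s1.2.2 sABD.2.2 sACD.2.2
    (hint a ha) (hint b hb) (hint c hc) (hint d hd)


/-! ### the x0 criterion -/

lemma crit_side {a b c d e : α} (ha : a ∈ X) (hb : b ∈ X) (hc : c ∈ X) (hd : d ∈ X)
    (he : e ∈ X)
    (hab : a ≠ b) (hac : a ≠ c) (had : a ≠ d) (hae : a ≠ e)
    (hbc : b ≠ c) (hbd : b ≠ d) (hbe : b ≠ e)
    (hcd : c ≠ d) (hce : c ≠ e) (hde : d ≠ e)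
    (heq : T.med (T.leaf a) (T.leaf b) (T.leaf c) = T.med (T.leaf a) (T.leaf b) (T.leaf d))
    (hne : T.med (T.leaf a) (T.leaf b) (T.leaf e) ≠ T.med (T.leaf a) (T.leaf b) (T.leaf c))
    (hord : T.Btw (T.leaf a) (T.med (T.leaf a) (T.leaf b) (T.leaf e))
      (T.med (T.leaf a) (T.leaf b) (T.leaf c))) :
    T.ResolvesAs a e c d ∧ T.ResolvesAs b e c d := by
  have s1 := T.med_spec (T.leaf a) (T.leaf b) (T.leaf c)
  have s2 := T.med_spec (T.leaf a) (T.leaf b) (T.leaf d)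
  rw [← heq] at s2
  have sE := T.med_spec (T.leaf a) (T.leaf b) (T.leaf e)
  set M := T.med (T.leaf a) (T.leaf b) (T.leaf c) with hMdef
  set m0 := T.med (T.leaf a) (T.leaf b) (T.leaf e) with hm0def
  -- projections of c and d onto M seen from m0
  have hCm : T.Btw (T.leaf c) M m0 := T.proj s1 sE.1
  have hDm : T.Btw (T.leaf d) M m0 := T.proj s2 sE.1
  have hEM : T.Btw (T.leaf e) m0 M := T.proj sE s1.1
  have hAm0C : T.Btw (T.leaf a) m0 (T.leaf c) := by
    have h1 := s1.2.1; have h2 := hord; have h3 := hCm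
    have c1 := T.dcomm (T.leaf c) M; have c2 := T.dcomm (T.leaf c) m0
    have c3 := T.dcomm M m0
    unfold Btw at *; omega
  have hAm0D : T.Btw (T.leaf a) m0 (T.leaf d) := by
    have h1 := s2.2.1; have h2 := hord; have h3 := hDm
    have c1 := T.dcomm (T.leaf d) M; have c2 := T.dcomm (T.leaf d) m0
    have c3 := T.dcomm M m0
    unfold Btw at *; omega
  have hEm0C : T.Btw (T.leaf e) m0 (T.leaf c) := (T.proj2 sE s1 hne hord).1
  have hEm0D : T.Btw (T.leaf e) m0 (T.leaf d) := (T.proj2 sE s2 hne hord).1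
  have hEMC : T.Btw (T.leaf e) M (T.leaf c) := (T.proj2 sE s1 hne hord).2
  have hEMD : T.Btw (T.leaf e) M (T.leaf d) := (T.proj2 sE s2 hne hord).2
  have hBME : T.Btw (T.leaf b) M (T.leaf e) := by
    have h1 := hord; have h2 := s1.1; have h3 := sE.1
    have h4 := sE.2.2  -- Btw B m0 E
    have h5 := hEM
    have c1 := T.dcomm (T.leaf b) m0; have c2 := T.dcomm (T.leaf b) M
    have c3 := T.dcomm (T.leaf e) m0; have c4 := T.dcomm (T.leaf e) M
    have c5 := T.dcomm m0 M
    unfold Btw at *; omega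
  constructor
  · -- R a e c d via median m0
    refine T.resolves_of_med_eq ha he hc hd hae hac had (Ne.symm hce) (Ne.symm hde) hcd ?_
    rw [← T.eq_med (⟨sE.2.1, hAm0C, hEm0C⟩ :
      T.IsMed m0 (T.leaf a) (T.leaf e) (T.leaf c))]
    rw [← T.eq_med (⟨sE.2.1, hAm0D, hEm0D⟩ :
      T.IsMed m0 (T.leaf a) (T.leaf e) (T.leaf d))]
  · -- R b e c d via median M
    refine T.resolves_of_med_eq hb he hc hd hbe hbc hbd (Ne.symm hce) (Ne.symm hde) hcd ?_
    rw [← T.eq_med (⟨hBME, s1.2.2, hEMC⟩ :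
      T.IsMed M (T.leaf b) (T.leaf e) (T.leaf c))]
    rw [← T.eq_med (⟨hBME, s2.2.2, hEMD⟩ :
      T.IsMed M (T.leaf b) (T.leaf e) (T.leaf d))]

lemma crit_fwd {a b c d e : α} (ha : a ∈ X) (hb : b ∈ X) (hc : c ∈ X) (hd : d ∈ X)
    (he : e ∈ X)
    (hab : a ≠ b) (hac : a ≠ c) (had : a ≠ d) (hae : a ≠ e)
    (hbc : b ≠ c) (hbd : b ≠ d) (hbe : b ≠ e)
    (hcd : c ≠ d) (hce : c ≠ e) (hde : d ≠ e)
    (h : T.ResolvesAs a b c d) :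
    (T.ResolvesAs a e c d ∧ T.ResolvesAs b e c d) ∨
    (T.ResolvesAs a b c e ∧ T.ResolvesAs a b d e) := by
  have heq := T.med_eq_of_resolves ha hb hc hd h
  by_cases h0 : T.med (T.leaf a) (T.leaf b) (T.leaf e) = T.med (T.leaf a) (T.leaf b) (T.leaf c)
  · right
    constructor
    · exact T.resolves_of_med_eq ha hb hc he hab hac hae hbc hbe hce h0.symm
    · exact T.resolves_of_med_eq ha hb hd he hab had hae hbd hbe hde (heq ▸ h0.symm)
  · left
    rcases T.btw_compare (T.med_spec (T.leaf a) (T.leaf b) (T.leaf e)).1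
        (T.med_spec (T.leaf a) (T.leaf b) (T.leaf c)).1 with h1 | h2
    · exact T.crit_side ha hb hc hd he hab hac had hae hbc hbd hbe hcd hce hde heq h0 h1
    · -- swap roles of a and b
      have s1 := T.med_spec (T.leaf a) (T.leaf b) (T.leaf c)
      have sE := T.med_spec (T.leaf a) (T.leaf b) (T.leaf e)
      have hBAC : T.med (T.leaf b) (T.leaf a) (T.leaf c) =
          T.med (T.leaf a) (T.leaf b) (T.leaf c) := (T.eq_med (T.isMed_swap12 s1)).symm
      have hBAD : T.med (T.leaf b) (T.leaf a) (T.leaf d) =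
          T.med (T.leaf a) (T.leaf b) (T.leaf d) := (T.eq_med (T.isMed_swap12
            (T.med_spec (T.leaf a) (T.leaf b) (T.leaf d)))).symm
      have hBAE : T.med (T.leaf b) (T.leaf a) (T.leaf e) =
          T.med (T.leaf a) (T.leaf b) (T.leaf e) := (T.eq_med (T.isMed_swap12 sE)).symm
      have hordB : T.Btw (T.leaf b) (T.med (T.leaf a) (T.leaf b) (T.leaf e))
          (T.med (T.leaf a) (T.leaf b) (T.leaf c)) := by
        have h3 := s1.1; have h4 := sE.1
        set M := T.med (T.leaf a) (T.leaf b) (T.leaf c)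
        set m0 := T.med (T.leaf a) (T.leaf b) (T.leaf e)
        have c1 := T.dcomm (T.leaf b) m0; have c2 := T.dcomm (T.leaf b) M
        have c3 := T.dcomm M m0
        unfold Btw at *; omega
      have := T.crit_side hb ha hc hd he (Ne.symm hab) hbc hbd hbe hac had hae hcd hce hde
        (by rw [hBAC, hBAD]; exact heq) (by rw [hBAE, hBAC]; exact h0) (by rw [hBAE, hBAC]; exact hordB)
      exact ⟨this.2, this.1⟩


/-! ### agreement transfer -/

variable {T} in
def Agree0 (T T' : PhyloTree X) (x0 : α) : Prop :=
  ∀ a b c d : α, a ∈ X → b ∈ X → c ∈ X → d ∈ X →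
    a ≠ b → a ≠ c → a ≠ d → b ≠ c → b ≠ d → c ≠ d →
    (x0 = a ∨ x0 = b ∨ x0 = c ∨ x0 = d) →
    (T.ResolvesAs a b c d ↔ T'.ResolvesAs a b c d)

lemma Agree0.symm' {T T' : PhyloTree X} {x0 : α} (H : Agree0 T T' x0) : Agree0 T' T x0 :=
  fun a b c d ha hb hc hd h1 h2 h3 h4 h5 h6 hx =>
    (H a b c d ha hb hc hd h1 h2 h3 h4 h5 h6 hx).symm

lemma agree_fwd {T T' : PhyloTree X} {x0 : α} (hx0 : x0 ∈ X) (H : Agree0 T T' x0)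
    {a b c d : α} (ha : a ∈ X) (hb : b ∈ X) (hc : c ∈ X) (hd : d ∈ X)
    (hab : a ≠ b) (hac : a ≠ c) (had : a ≠ d) (hbc : b ≠ c) (hbd : b ≠ d) (hcd : c ≠ d)
    (h : T.ResolvesAs a b c d) : T'.ResolvesAs a b c d := by
  by_cases hxa : x0 = a
  · exact (H a b c d ha hb hc hd hab hac had hbc hbd hcd (Or.inl hxa)).1 h
  by_cases hxb : x0 = b
  · exact (H a b c d ha hb hc hd hab hac had hbc hbd hcd (Or.inr (Or.inl hxb))).1 h
  by_cases hxc : x0 = c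
  · exact (H a b c d ha hb hc hd hab hac had hbc hbd hcd (Or.inr (Or.inr (Or.inl hxc)))).1 h
  by_cases hxd : x0 = d
  · exact (H a b c d ha hb hc hd hab hac had hbc hbd hcd (Or.inr (Or.inr (Or.inr hxd)))).1 h
  -- x0 distinct from all four
  set e := x0 with hedef
  have he : e ∈ X := hx0
  have hae : a ≠ e := fun h' => hxa h'.symm
  have hbe : b ≠ e := fun h' => hxb h'.symm
  have hce : c ≠ e := fun h' => hxc h'.symm
  have hde : d ≠ e := fun h' => hxd h'.symm
  have RHS := T.crit_fwd ha hb hc hd he hab hac had hae hbc hbd hbe hcd hce hde h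
  -- transfer RHS to T'
  have RHS' : (T'.ResolvesAs a e c d ∧ T'.ResolvesAs b e c d) ∨
      (T'.ResolvesAs a b c e ∧ T'.ResolvesAs a b d e) := by
    rcases RHS with ⟨r1, r2⟩ | ⟨r1, r2⟩
    · exact Or.inl ⟨(H a e c d ha he hc hd hae hac had (Ne.symm hce) (Ne.symm hde) hcd
        (Or.inr (Or.inl rfl))).1 r1,
        (H b e c d hb he hc hd hbe hbc hbd (Ne.symm hce) (Ne.symm hde) hcd
        (Or.inr (Or.inl rfl))).1 r2⟩
    · exact Or.inr ⟨(H a b c e ha hb hc he hab hac hae hbc hbe hce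
        (Or.inr (Or.inr (Or.inr rfl)))).1 r1,
        (H a b d e ha hb hd he hab had hae hbd hbe hde
        (Or.inr (Or.inr (Or.inr rfl)))).1 r2⟩
  rcases T'.resolves_total ha hb hc hd hab hac had hbc hbd hcd with hgood | hacbd | hadbc
  · exact hgood
  · exfalso
    have P := T'.crit_fwd ha hc hb hd he hac hab had hae (Ne.symm hbc) hcd hce hbd hbe hde hacbd
    rcases RHS' with ⟨r1, r2⟩ | ⟨r1, r2⟩ <;> rcases P with ⟨p1, p2⟩ | ⟨p1, p2⟩
    · exact T'.resolves_excl he hb hc hd (Ne.symm hbe) (Ne.symm hce) (Ne.symm hde) hbc hbd hcd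
        (T'.resolves_swap_left r2) (T'.resolves_swap_left p2)
    · exact T'.resolves_excl ha he hc hd hae hac had (Ne.symm hce) (Ne.symm hde) hcd
        r1 (T'.resolves_swap_right p2)
    · exact T'.resolves_excl ha hb he hd hab hae had hbe hbd (Ne.symm hde)
        (T'.resolves_swap_right r2) p1
    · exact T'.resolves_excl ha hb hc he hab hac hae hbc hbe hce r1 p1
  · exfalso
    have P := T'.crit_fwd ha hd hb hc he had hab hac hae (Ne.symm hbd) (Ne.symm hcd) hde hbc hbe hce hadbc
    rcases RHS' with ⟨r1, r2⟩ | ⟨r1, r2⟩ <;> rcases P with ⟨p1, p2⟩ | ⟨p1, p2⟩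
    · exact T'.resolves_excl he hb hd hc (Ne.symm hbe) (Ne.symm hde) (Ne.symm hce) hbd hbc
        (Ne.symm hcd) (T'.resolves_swap_right (T'.resolves_swap_left r2))
        (T'.resolves_swap_left p2)
    · exact T'.resolves_excl ha he hd hc hae had hac (Ne.symm hde) (Ne.symm hce) (Ne.symm hcd)
        (T'.resolves_swap_right r1) (T'.resolves_swap_right p2)
    · exact T'.resolves_excl ha hb he hc hab hae hac hbe hbc (Ne.symm hce)
        (T'.resolves_swap_right r1) p1
    · exact T'.resolves_excl ha hb hd he hab had hae hbd hbe hde r2 p1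

/-- full agreement on all quartets -/
lemma agree_all {T T' : PhyloTree X} {x0 : α} (hx0 : x0 ∈ X) (H : Agree0 T T' x0)
    {a b c d : α} (ha : a ∈ X) (hb : b ∈ X) (hc : c ∈ X) (hd : d ∈ X)
    (hab : a ≠ b) (hac : a ≠ c) (had : a ≠ d) (hbc : b ≠ c) (hbd : b ≠ d) (hcd : c ≠ d) :
    T.ResolvesAs a b c d ↔ T'.ResolvesAs a b c d :=
  ⟨agree_fwd hx0 H ha hb hc hd hab hac had hbc hbd hcd,
   agree_fwd hx0 H.symm' ha hb hc hd hab hac had hbc hbd hcd⟩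


/-! ### finding leaves in each direction -/

lemma adj_dist_cases {v w y : T.V} (hadj : T.G.Adj w y) :
    T.G.dist v y + 1 = T.G.dist v w ∨ T.G.dist v w + 1 = T.G.dist v y := by
  by_cases hy : T.Btw v y w
  · left
    have h1 : T.G.dist y w = 1 := T.adj_dist_one hadj.symm
    unfold Btw at hy; omega
  · right
    have hns : y ∉ (T.pth w v).support := by
      intro hmem
      exact hy (T.btw_symm (T.btw_iff_mem.2 hmem))
    have hP : (SimpleGraph.Walk.cons hadj.symm (T.pth w v)).IsPath :=
      (SimpleGraph.Walk.cons_isPath_iff _ _).2 ⟨T.pth_isPath w v, hns⟩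
    have := T.pth_eq _ hP
    have hl := T.pth_length y v
    rw [← this, SimpleGraph.Walk.length_cons, T.pth_length] at hl
    rw [T.dcomm v w, T.dcomm v y]; omega

lemma exists_leaf_dir {v n : T.V} (hadj : T.G.Adj v n) :
    ∃ x ∈ X, T.Btw v n (T.leaf x) := by
  have hfin : ({w | T.Btw v n w} : Set T.V).Finite := Set.toFinite _
  have hne : ({w | T.Btw v n w} : Set T.V).Nonempty := ⟨n, T.btw_self_right v n⟩
  obtain ⟨w, hw, hmax⟩ := Set.Finite.exists_maximalFor (fun w => T.G.dist v w) _ hfin hne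
  simp only [Set.mem_setOf_eq] at hw
  have hvn : T.G.dist v n = 1 := T.adj_dist_one hadj
  have hwv : w ≠ v := by
    intro he
    unfold Btw at hw
    rw [he, SimpleGraph.dist_self] at hw
    omega
  by_cases hleaf : ∃ x ∈ X, T.leaf x = w
  · obtain ⟨x, hx, hxe⟩ := hleaf
    exact ⟨x, hx, hxe.symm ▸ hw⟩
  · exfalso
    push_neg at hleaf
    have hcard := T.internal_degree w hleaf
    obtain ⟨p, q, r, hpq, hpr, hqr, hset⟩ := Set.ncard_eq_three.1 hcard
    -- the neighbor of w towards v
    have hnb := T.dir_spec hwv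
    have hnbmem : T.dir w v ∈ T.G.neighborSet w := hnb.1
    -- pick a neighbor different from dir w v
    have hpick : ∃ y, y ∈ T.G.neighborSet w ∧ y ≠ T.dir w v := by
      rw [hset] at hnbmem ⊢
      simp only [Set.mem_insert_iff, Set.mem_singleton_iff] at hnbmem ⊢
      rcases hnbmem with h | h | h
      · exact ⟨q, Or.inr (Or.inl rfl), by rw [h]; exact Ne.symm hpq⟩
      · exact ⟨p, Or.inl rfl, by rw [h]; exact hpq⟩
      · exact ⟨p, Or.inl rfl, by rw [h]; exact hpr⟩
    obtain ⟨y, hymem, hyne⟩ := hpick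
    have hyadj : T.G.Adj w y := hymem
    rcases T.adj_dist_cases (v := v) hyadj with hcase | hcase
    · -- y is on the path from v to w, hence y = dir w v
      apply hyne
      refine T.dir_eq hyadj ?_
      rw [T.dcomm y v, T.dcomm w v]; omega
    · -- y is further away: contradicts maximality
      have hyS : T.Btw v n y := by
        have t1 : T.G.dist n y ≤ T.G.dist n w + T.G.dist w y := T.connected.dist_triangle
        have t2 : T.G.dist v y ≤ T.G.dist v n + T.G.dist n y := T.connected.dist_triangle
        have h1 : T.G.dist w y = 1 := T.adj_dist_one hyadj
        unfold Btw at hw ⊢; omega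
      have : T.G.dist v y ≤ T.G.dist v w := hmax (j := y) hyS (show T.G.dist v w ≤ T.G.dist v y by omega)
      omega

/-! ### every vertex is a median of leaves -/

lemma exists_rep (v : T.V) :
    ∃ p : α × α × α, p.1 ∈ X ∧ p.2.1 ∈ X ∧ p.2.2 ∈ X ∧
      T.med (T.leaf p.1) (T.leaf p.2.1) (T.leaf p.2.2) = v := by
  by_cases hleaf : ∃ x ∈ X, T.leaf x = v
  · obtain ⟨x, hx, hxe⟩ := hleaf
    exact ⟨(x, x, x), hx, hx, hx, by rw [T.med_self_left, hxe]⟩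
  · push_neg at hleaf
    have hcard := T.internal_degree v hleaf
    obtain ⟨n1, n2, n3, h12, h13, h23, hset⟩ := Set.ncard_eq_three.1 hcard
    have ha1 : T.G.Adj v n1 := by rw [← SimpleGraph.mem_neighborSet, hset]; simp
    have ha2 : T.G.Adj v n2 := by rw [← SimpleGraph.mem_neighborSet, hset]; simp
    have ha3 : T.G.Adj v n3 := by rw [← SimpleGraph.mem_neighborSet, hset]; simp
    obtain ⟨x1, hx1, hb1⟩ := T.exists_leaf_dir ha1
    obtain ⟨x2, hx2, hb2⟩ := T.exists_leaf_dir ha2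
    obtain ⟨x3, hx3, hb3⟩ := T.exists_leaf_dir ha3
    have hL1v : T.leaf x1 ≠ v := fun he => hleaf x1 hx1 he
    have hL2v : T.leaf x2 ≠ v := fun he => hleaf x2 hx2 he
    have hL3v : T.leaf x3 ≠ v := fun he => hleaf x3 hx3 he
    have hd1 : T.dir v (T.leaf x1) = n1 := by
      rw [← T.dir_of_btw hb1 ha1.ne']
      exact (T.dir_eq ha1 (by rw [SimpleGraph.dist_self, T.adj_dist_one ha1])).symm
    have hd2 : T.dir v (T.leaf x2) = n2 := by
      rw [← T.dir_of_btw hb2 ha2.ne']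
      exact (T.dir_eq ha2 (by rw [SimpleGraph.dist_self, T.adj_dist_one ha2])).symm
    have hd3 : T.dir v (T.leaf x3) = n3 := by
      rw [← T.dir_of_btw hb3 ha3.ne']
      exact (T.dir_eq ha3 (by rw [SimpleGraph.dist_self, T.adj_dist_one ha3])).symm
    have hB12 : T.Btw (T.leaf x1) v (T.leaf x2) :=
      T.btw_of_dir_ne hL1v hL2v (by rw [hd1, hd2]; exact h12)
    have hB13 : T.Btw (T.leaf x1) v (T.leaf x3) :=
      T.btw_of_dir_ne hL1v hL3v (by rw [hd1, hd3]; exact h13)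
    have hB23 : T.Btw (T.leaf x2) v (T.leaf x3) :=
      T.btw_of_dir_ne hL2v hL3v (by rw [hd2, hd3]; exact h23)
    exact ⟨(x1, x2, x3), hx1, hx2, hx3, (T.eq_med ⟨hB12, hB13, hB23⟩).symm⟩

noncomputable def rep (v : T.V) : α × α × α := (T.exists_rep v).choose

lemma rep_spec (v : T.V) : (T.rep v).1 ∈ X ∧ (T.rep v).2.1 ∈ X ∧ (T.rep v).2.2 ∈ X ∧
    T.med (T.leaf (T.rep v).1) (T.leaf (T.rep v).2.1) (T.leaf (T.rep v).2.2) = v :=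
  (T.exists_rep v).choose_spec

/-! ### median permutation helpers -/

lemma med_swap12 (u v w : T.V) : T.med u v w = T.med v u w :=
  T.eq_med (T.isMed_swap12 (T.med_spec u v w))

lemma med_swap23 (u v w : T.V) : T.med u v w = T.med u w v :=
  T.eq_med (T.isMed_swap23 (T.med_spec u v w))

lemma med_rot (u v w : T.V) : T.med u v w = T.med v w u :=
  T.eq_med (T.isMed_rot (T.med_spec u v w))


/-! ### transferring medians between trees that agree on all quartets -/

variable {T} in
def AgreeAll (T T' : PhyloTree X) : Prop :=
  ∀ a b c d : α, a ∈ X → b ∈ X → c ∈ X → d ∈ X →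
    a ≠ b → a ≠ c → a ≠ d → b ≠ c → b ≠ d → c ≠ d →
    (T.ResolvesAs a b c d ↔ T'.ResolvesAs a b c d)

lemma AgreeAll.symm' {T T' : PhyloTree X} (H : AgreeAll T T') : AgreeAll T' T :=
  fun a b c d ha hb hc hd h1 h2 h3 h4 h5 h6 =>
    (H a b c d ha hb hc hd h1 h2 h3 h4 h5 h6).symm

lemma swap_med {T T' : PhyloTree X} (HA : AgreeAll T T') {a b c g : α}
    (ha : a ∈ X) (hb : b ∈ X) (hc : c ∈ X) (hg : g ∈ X)
    (hab : a ≠ b) (hac : a ≠ c) (hbc : b ≠ c)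
    (hdir : T.dir (T.med (T.leaf a) (T.leaf b) (T.leaf c)) (T.leaf g) =
            T.dir (T.med (T.leaf a) (T.leaf b) (T.leaf c)) (T.leaf c)) :
    T.med (T.leaf a) (T.leaf b) (T.leaf g) = T.med (T.leaf a) (T.leaf b) (T.leaf c) ∧
    T'.med (T'.leaf a) (T'.leaf b) (T'.leaf g) = T'.med (T'.leaf a) (T'.leaf b) (T'.leaf c) := by
  by_cases hgc : g = c
  · subst hgc; exact ⟨rfl, rfl⟩
  have hint := T.med_leaves_internal ha hb hc hab hac hbc
  have s := T.med_spec (T.leaf a) (T.leaf b) (T.leaf c)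
  have hga : g ≠ a := by
    intro he; rw [he] at hdir
    exact T.dir_ne s.2.1 (hint a ha) (hint c hc) hdir
  have hgb : g ≠ b := by
    intro he; rw [he] at hdir
    exact T.dir_ne s.2.2 (hint b hb) (hint c hc) hdir
  have hAmG : T.Btw (T.leaf a) (T.med (T.leaf a) (T.leaf b) (T.leaf c)) (T.leaf g) :=
    T.btw_of_dir_ne (hint a ha) (hint g hg)
      (by rw [hdir]; exact T.dir_ne s.2.1 (hint a ha) (hint c hc))
  have hBmG : T.Btw (T.leaf b) (T.med (T.leaf a) (T.leaf b) (T.leaf c)) (T.leaf g) :=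
    T.btw_of_dir_ne (hint b hb) (hint g hg)
      (by rw [hdir]; exact T.dir_ne s.2.2 (hint b hb) (hint c hc))
  have h1 : T.med (T.leaf a) (T.leaf b) (T.leaf g) = T.med (T.leaf a) (T.leaf b) (T.leaf c) :=
    (T.eq_med ⟨s.1, hAmG, hBmG⟩).symm
  have hRT : T.ResolvesAs a b c g :=
    T.resolves_of_med_eq ha hb hc hg hab hac (Ne.symm hga) hbc (Ne.symm hgb)
      (fun h => hgc h.symm) h1.symm
  have hRT' : T'.ResolvesAs a b c g :=
    (HA a b c g ha hb hc hg hab hac (Ne.symm hga) hbc (Ne.symm hgb) (fun h => hgc h.symm)).1 hRT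
  exact ⟨h1, (T'.med_eq_of_resolves ha hb hc hg hRT').symm⟩

lemma wd3_aux {T T' : PhyloTree X} (HA : AgreeAll T T') {a b c d e f : α}
    (ha : a ∈ X) (hb : b ∈ X) (hc : c ∈ X) (hd : d ∈ X) (he : e ∈ X) (hf : f ∈ X)
    (hab : a ≠ b) (hac : a ≠ c) (hbc : b ≠ c)
    (hde : d ≠ e) (hdf : d ≠ f) (hef : e ≠ f)
    (hdirF : T.dir (T.med (T.leaf a) (T.leaf b) (T.leaf c)) (T.leaf f) =
             T.dir (T.med (T.leaf a) (T.leaf b) (T.leaf c)) (T.leaf c))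
    (hdirE : T.dir (T.med (T.leaf a) (T.leaf b) (T.leaf c)) (T.leaf e) =
             T.dir (T.med (T.leaf a) (T.leaf b) (T.leaf c)) (T.leaf b))
    (hdirD : T.dir (T.med (T.leaf a) (T.leaf b) (T.leaf c)) (T.leaf d) =
             T.dir (T.med (T.leaf a) (T.leaf b) (T.leaf c)) (T.leaf a)) :
    T'.med (T'.leaf d) (T'.leaf e) (T'.leaf f) =
      T'.med (T'.leaf a) (T'.leaf b) (T'.leaf c) := by
  have hint := T.med_leaves_internal ha hb hc hab hac hbc
  have s := T.med_spec (T.leaf a) (T.leaf b) (T.leaf c)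
  have s1 := swap_med HA ha hb hc hf hab hac hbc hdirF
  -- distinctness of (a, f, b)
  have haf : a ≠ f := by
    intro heq; rw [← heq] at hdirF
    exact T.dir_ne s.2.1 (hint a ha) (hint c hc) hdirF
  have hfb : f ≠ b := by
    intro heq; rw [heq] at hdirF
    exact T.dir_ne s.2.2 (hint b hb) (hint c hc) hdirF
  -- base triple (a, f, b)
  have hAFB : T.med (T.leaf a) (T.leaf b) (T.leaf c) =
      T.med (T.leaf a) (T.leaf f) (T.leaf b) := by
    have : T.IsMed (T.med (T.leaf a) (T.leaf b) (T.leaf c))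
        (T.leaf a) (T.leaf b) (T.leaf f) := by rw [← s1.1]; exact T.med_spec _ _ _
    exact T.eq_med (T.isMed_swap23 this)
  have s2 := swap_med HA ha hf hb he haf hab hfb
    (by rw [← hAFB]; exact hdirE)
  -- base triple (e, f, a)
  have hea : e ≠ a := by
    intro heq; rw [heq] at hdirE
    exact T.dir_ne s.1 (hint a ha) (hint b hb) hdirE
  have hEFA : T.med (T.leaf a) (T.leaf b) (T.leaf c) =
      T.med (T.leaf e) (T.leaf f) (T.leaf a) := by
    have hAFE : T.med (T.leaf a) (T.leaf f) (T.leaf e) =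
        T.med (T.leaf a) (T.leaf b) (T.leaf c) := s2.1.trans hAFB.symm
    have h0 : T.IsMed (T.med (T.leaf a) (T.leaf b) (T.leaf c))
        (T.leaf a) (T.leaf f) (T.leaf e) :=
      hAFE ▸ T.med_spec (T.leaf a) (T.leaf f) (T.leaf e)
    exact T.eq_med (T.isMed_swap12 (T.isMed_swap23 (T.isMed_swap12 h0)))
  have s3 := swap_med HA he hf ha hd hef hea (Ne.symm haf)
    (by rw [← hEFA]; exact hdirD)
  -- now chain the T' equalities
  calc T'.med (T'.leaf d) (T'.leaf e) (T'.leaf f)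
      = T'.med (T'.leaf e) (T'.leaf f) (T'.leaf d) := T'.med_rot _ _ _
    _ = T'.med (T'.leaf e) (T'.leaf f) (T'.leaf a) := s3.2
    _ = T'.med (T'.leaf a) (T'.leaf f) (T'.leaf e) := by
          rw [T'.med_rot (T'.leaf e) (T'.leaf f) (T'.leaf a),
              T'.med_rot (T'.leaf f) (T'.leaf a) (T'.leaf e),
              T'.med_swap23 (T'.leaf a) (T'.leaf e) (T'.leaf f)]
    _ = T'.med (T'.leaf a) (T'.leaf f) (T'.leaf b) := s2.2
    _ = T'.med (T'.leaf a) (T'.leaf b) (T'.leaf f) := (T'.med_swap23 _ _ _).symm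
    _ = T'.med (T'.leaf a) (T'.leaf b) (T'.leaf c) := s1.2


lemma wd3 {T T' : PhyloTree X} (HA : AgreeAll T T') {a b c d e f : α}
    (ha : a ∈ X) (hb : b ∈ X) (hc : c ∈ X) (hd : d ∈ X) (he : e ∈ X) (hf : f ∈ X)
    (hab : a ≠ b) (hac : a ≠ c) (hbc : b ≠ c)
    (hde : d ≠ e) (hdf : d ≠ f) (hef : e ≠ f)
    (hMeq : T.med (T.leaf d) (T.leaf e) (T.leaf f) = T.med (T.leaf a) (T.leaf b) (T.leaf c)) :
    T'.med (T'.leaf d) (T'.leaf e) (T'.leaf f) =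
      T'.med (T'.leaf a) (T'.leaf b) (T'.leaf c) := by
  have hint := T.med_leaves_internal ha hb hc hab hac hbc
  have hintD := T.med_leaves_internal hd he hf hde hdf hef
  rw [hMeq] at hintD
  have sA := T.med_spec (T.leaf a) (T.leaf b) (T.leaf c)
  have sD : T.IsMed (T.med (T.leaf a) (T.leaf b) (T.leaf c))
      (T.leaf d) (T.leaf e) (T.leaf f) := hMeq ▸ T.med_spec (T.leaf d) (T.leaf e) (T.leaf f)
  set m := T.med (T.leaf a) (T.leaf b) (T.leaf c) with hm
  have pA := hint a ha; have pB := hint b hb; have pC := hint c hc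
  have pD := hintD d hd; have pE := hintD e he; have pF := hintD f hf
  have dAB := T.dir_ne sA.1 pA pB
  have dAC := T.dir_ne sA.2.1 pA pC
  have dBC := T.dir_ne sA.2.2 pB pC
  have dDE := T.dir_ne sD.1 pD pE
  have dDF := T.dir_ne sD.2.1 pD pF
  have dEF := T.dir_ne sD.2.2 pE pF
  have hFcases := T.nbr_cases hint (T.dir_adj (Ne.symm pA)) (T.dir_adj (Ne.symm pB))
    (T.dir_adj (Ne.symm pC)) dAB dAC dBC (T.dir_adj (Ne.symm pF))
  have hEcases := T.nbr_cases hint (T.dir_adj (Ne.symm pA)) (T.dir_adj (Ne.symm pB))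
    (T.dir_adj (Ne.symm pC)) dAB dAC dBC (T.dir_adj (Ne.symm pE))
  have hDcases := T.nbr_cases hint (T.dir_adj (Ne.symm pA)) (T.dir_adj (Ne.symm pB))
    (T.dir_adj (Ne.symm pC)) dAB dAC dBC (T.dir_adj (Ne.symm pD))
  -- handy permuted medians
  have permBAC : T.IsMed m (T.leaf b) (T.leaf a) (T.leaf c) := T.isMed_swap12 sA
  have permACB : T.IsMed m (T.leaf a) (T.leaf c) (T.leaf b) := T.isMed_swap23 sA
  have permCAB : T.IsMed m (T.leaf c) (T.leaf a) (T.leaf b) :=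
    ⟨T.btw_symm sA.2.1, T.btw_symm sA.2.2, sA.1⟩
  have permBCA : T.IsMed m (T.leaf b) (T.leaf c) (T.leaf a) :=
    ⟨sA.2.2, T.btw_symm sA.1, T.btw_symm sA.2.1⟩
  have permCBA : T.IsMed m (T.leaf c) (T.leaf b) (T.leaf a) :=
    ⟨T.btw_symm sA.2.2, T.btw_symm sA.2.1, T.btw_symm sA.1⟩
  -- T'-side permutation equalities
  have tBAC : T'.med (T'.leaf b) (T'.leaf a) (T'.leaf c) =
      T'.med (T'.leaf a) (T'.leaf b) (T'.leaf c) := (T'.med_swap12 _ _ _).symm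
  have tACB : T'.med (T'.leaf a) (T'.leaf c) (T'.leaf b) =
      T'.med (T'.leaf a) (T'.leaf b) (T'.leaf c) := (T'.med_swap23 _ _ _).symm
  have tCAB : T'.med (T'.leaf c) (T'.leaf a) (T'.leaf b) =
      T'.med (T'.leaf a) (T'.leaf b) (T'.leaf c) :=
    ((T'.med_rot _ _ _).trans (T'.med_rot _ _ _)).symm
  have tBCA : T'.med (T'.leaf b) (T'.leaf c) (T'.leaf a) =
      T'.med (T'.leaf a) (T'.leaf b) (T'.leaf c) := (T'.med_rot _ _ _).symm
  have tCBA : T'.med (T'.leaf c) (T'.leaf b) (T'.leaf a) =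
      T'.med (T'.leaf a) (T'.leaf b) (T'.leaf c) := by
    rw [T'.med_swap23 (T'.leaf c) (T'.leaf b) (T'.leaf a)]
    exact tCAB
  rcases hFcases with hF | hF | hF
  · -- dir m F = dir m A
    rcases hEcases with hE | hE | hE
    · exact absurd (hE.trans hF.symm) dEF
    · -- E ↦ B, so D ↦ C : π = (c, b, a)
      have hD : T.dir m (T.leaf d) = T.dir m (T.leaf c) := by
        rcases hDcases with h | h | h
        · exact absurd (h.trans hF.symm) dDF
        · exact absurd (h.trans hE.symm) dDE
        · exact h
      have hpermEq : m = T.med (T.leaf c) (T.leaf b) (T.leaf a) := T.eq_med permCBA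
      refine (wd3_aux HA hc hb ha hd he hf (Ne.symm hbc) (Ne.symm hac) (Ne.symm hab)
        hde hdf hef ?_ ?_ ?_).trans tCBA
      · rw [← hpermEq]; exact hF
      · rw [← hpermEq]; exact hE
      · rw [← hpermEq]; exact hD
    · -- E ↦ C, so D ↦ B : π = (b, c, a)
      have hD : T.dir m (T.leaf d) = T.dir m (T.leaf b) := by
        rcases hDcases with h | h | h
        · exact absurd (h.trans hF.symm) dDF
        · exact h
        · exact absurd (h.trans hE.symm) dDE
      have hpermEq : m = T.med (T.leaf b) (T.leaf c) (T.leaf a) := T.eq_med permBCA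
      refine (wd3_aux HA hb hc ha hd he hf hbc (Ne.symm hab) (Ne.symm hac)
        hde hdf hef ?_ ?_ ?_).trans tBCA
      · rw [← hpermEq]; exact hF
      · rw [← hpermEq]; exact hE
      · rw [← hpermEq]; exact hD
  · -- dir m F = dir m B
    rcases hEcases with hE | hE | hE
    · -- E ↦ A, D ↦ C : π = (c, a, b)
      have hD : T.dir m (T.leaf d) = T.dir m (T.leaf c) := by
        rcases hDcases with h | h | h
        · exact absurd (h.trans hE.symm) dDE
        · exact absurd (h.trans hF.symm) dDF
        · exact h
      have hpermEq : m = T.med (T.leaf c) (T.leaf a) (T.leaf b) := T.eq_med permCAB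
      refine (wd3_aux HA hc ha hb hd he hf (Ne.symm hac) (Ne.symm hbc) hab
        hde hdf hef ?_ ?_ ?_).trans tCAB
      · rw [← hpermEq]; exact hF
      · rw [← hpermEq]; exact hE
      · rw [← hpermEq]; exact hD
    · exact absurd (hE.trans hF.symm) dEF
    · -- E ↦ C, D ↦ A : π = (a, c, b)
      have hD : T.dir m (T.leaf d) = T.dir m (T.leaf a) := by
        rcases hDcases with h | h | h
        · exact h
        · exact absurd (h.trans hF.symm) dDF
        · exact absurd (h.trans hE.symm) dDE
      have hpermEq : m = T.med (T.leaf a) (T.leaf c) (T.leaf b) := T.eq_med permACB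
      refine (wd3_aux HA ha hc hb hd he hf hac hab (Ne.symm hbc)
        hde hdf hef ?_ ?_ ?_).trans tACB
      · rw [← hpermEq]; exact hF
      · rw [← hpermEq]; exact hE
      · rw [← hpermEq]; exact hD
  · -- dir m F = dir m C
    rcases hEcases with hE | hE | hE
    · -- E ↦ A, D ↦ B : π = (b, a, c)
      have hD : T.dir m (T.leaf d) = T.dir m (T.leaf b) := by
        rcases hDcases with h | h | h
        · exact absurd (h.trans hE.symm) dDE
        · exact h
        · exact absurd (h.trans hF.symm) dDF
      have hpermEq : m = T.med (T.leaf b) (T.leaf a) (T.leaf c) := T.eq_med permBAC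
      refine (wd3_aux HA hb ha hc hd he hf (Ne.symm hab) hbc hac
        hde hdf hef ?_ ?_ ?_).trans tBAC
      · rw [← hpermEq]; exact hF
      · rw [← hpermEq]; exact hE
      · rw [← hpermEq]; exact hD
    · -- E ↦ B, D ↦ A : identity
      have hD : T.dir m (T.leaf d) = T.dir m (T.leaf a) := by
        rcases hDcases with h | h | h
        · exact h
        · exact absurd (h.trans hE.symm) dDE
        · exact absurd (h.trans hF.symm) dDF
      exact wd3_aux HA ha hb hc hd he hf hab hac hbc hde hdf hef hF hE hD
    · exact absurd (hE.trans hF.symm) dEF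

lemma med_degen {x y z : α} (h : ¬(x ≠ y ∧ x ≠ z ∧ y ≠ z)) :
    ∃ g, (g = x ∨ g = y ∨ g = z) ∧
      ∀ (S : PhyloTree X), S.med (S.leaf x) (S.leaf y) (S.leaf z) = S.leaf g := by
  by_cases hxy : x = y
  · subst hxy; exact ⟨x, Or.inl rfl, fun S => S.med_self_left _ _⟩
  by_cases hxz : x = z
  · subst hxz; exact ⟨x, Or.inl rfl, fun S => S.med_self_mid _ _⟩
  by_cases hyz : y = z
  · subst hyz; exact ⟨y, Or.inr (Or.inl rfl), fun S => S.med_self_right _ _⟩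
  · exact absurd ⟨hxy, hxz, hyz⟩ h

lemma med_transfer {T T' : PhyloTree X} (HA : AgreeAll T T') {a b c d e f : α}
    (ha : a ∈ X) (hb : b ∈ X) (hc : c ∈ X) (hd : d ∈ X) (he : e ∈ X) (hf : f ∈ X)
    (hEq : T.med (T.leaf a) (T.leaf b) (T.leaf c) = T.med (T.leaf d) (T.leaf e) (T.leaf f)) :
    T'.med (T'.leaf a) (T'.leaf b) (T'.leaf c) =
      T'.med (T'.leaf d) (T'.leaf e) (T'.leaf f) := by
  by_cases h1 : a ≠ b ∧ a ≠ c ∧ b ≠ c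
  · by_cases h2 : d ≠ e ∧ d ≠ f ∧ e ≠ f
    · exact (wd3 HA ha hb hc hd he hf h1.1 h1.2.1 h1.2.2 h2.1 h2.2.1 h2.2.2 hEq.symm).symm
    · obtain ⟨g, hgor, hgall⟩ := med_degen (X := X) h2
      have hg : g ∈ X := by rcases hgor with h | h | h <;> subst h <;> assumption
      exfalso
      exact T.med_leaves_internal ha hb hc h1.1 h1.2.1 h1.2.2 g hg
        (by rw [hEq, hgall T])
  · obtain ⟨g, hgor, hgall⟩ := med_degen (X := X) h1
    have hg : g ∈ X := by rcases hgor with h | h | h <;> subst h <;> assumption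
    by_cases h2 : d ≠ e ∧ d ≠ f ∧ e ≠ f
    · exfalso
      exact T.med_leaves_internal hd he hf h2.1 h2.2.1 h2.2.2 g hg
        (by rw [← hEq, hgall T])
    · obtain ⟨g', hgor', hgall'⟩ := med_degen (X := X) h2
      have hg' : g' ∈ X := by rcases hgor' with h | h | h <;> subst h <;> assumption
      have : g = g' := by
        refine T.leaf_inj g hg g' hg' ?_
        rw [← hgall T, ← hgall' T, hEq]
      rw [hgall T', hgall' T', this]

noncomputable def phi (T T' : PhyloTree X) (v : T.V) : T'.V :=
  T'.med (T'.leaf (T.rep v).1) (T'.leaf (T.rep v).2.1) (T'.leaf (T.rep v).2.2)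

lemma phi_med {T T' : PhyloTree X} (HA : AgreeAll T T') {x y z : α}
    (hx : x ∈ X) (hy : y ∈ X) (hz : z ∈ X) :
    phi T T' (T.med (T.leaf x) (T.leaf y) (T.leaf z)) =
      T'.med (T'.leaf x) (T'.leaf y) (T'.leaf z) := by
  obtain ⟨h1, h2, h3, h4⟩ := T.rep_spec (T.med (T.leaf x) (T.leaf y) (T.leaf z))
  exact med_transfer HA h1 h2 h3 hx hy hz h4

lemma phi_leaf {T T' : PhyloTree X} (HA : AgreeAll T T') {x : α} (hx : x ∈ X) :
    phi T T' (T.leaf x) = T'.leaf x := by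
  have h := phi_med HA hx hx hx
  rw [T.med_self_left, T'.med_self_left] at h
  exact h

lemma phi_phi {T T' : PhyloTree X} (HA : AgreeAll T T') (v : T.V) :
    phi T' T (phi T T' v) = v := by
  obtain ⟨h1, h2, h3, h4⟩ := T.rep_spec v
  have : phi T T' v = T'.med (T'.leaf (T.rep v).1) (T'.leaf (T.rep v).2.1)
      (T'.leaf (T.rep v).2.2) := rfl
  rw [this, phi_med HA.symm' h1 h2 h3, h4]


lemma no_adjacent_leaves (hX : 3 ≤ X.card) {x y : α} (hx : x ∈ X) (hy : y ∈ X)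
    (hadj : T.G.Adj (T.leaf x) (T.leaf y)) : False := by
  classical
  have hall : ∀ z : T.V, z = T.leaf x ∨ z = T.leaf y := by
    intro z
    by_contra hno
    push_neg at hno
    obtain ⟨hzv, hzw⟩ := hno
    have h1 : T.dir (T.leaf x) z = T.leaf y :=
      T.leaf_unique_nbr hx (T.dir_adj (Ne.symm hzv)) hadj
    have h2 : T.dir (T.leaf y) z = T.leaf x :=
      T.leaf_unique_nbr hy (T.dir_adj (Ne.symm hzw)) hadj.symm
    have d1 := (T.dir_spec (Ne.symm hzv)).2
    have d2 := (T.dir_spec (Ne.symm hzw)).2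
    rw [h1] at d1; rw [h2] at d2
    omega
  obtain ⟨a, ha⟩ := Finset.card_pos.1 (by omega : 0 < X.card)
  have h2c : 0 < (X.erase a).card := by rw [Finset.card_erase_of_mem ha]; omega
  obtain ⟨b, hb'⟩ := Finset.card_pos.1 h2c
  have h3c : 0 < ((X.erase a).erase b).card := by
    rw [Finset.card_erase_of_mem hb', Finset.card_erase_of_mem ha]; omega
  obtain ⟨c, hc'⟩ := Finset.card_pos.1 h3c
  obtain ⟨hcb, hc2⟩ := Finset.mem_erase.1 hc'
  obtain ⟨hca, hcX⟩ := Finset.mem_erase.1 hc2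
  obtain ⟨hba, hbX⟩ := Finset.mem_erase.1 hb'
  have two : ∀ {i j : α}, i ∈ X → j ∈ X → i ≠ j → T.leaf i = T.leaf j → False :=
    fun hi hj hij he => hij (T.leaf_inj _ hi _ hj he)
  rcases hall (T.leaf a) with ha' | ha' <;> rcases hall (T.leaf b) with hb'' | hb'' <;>
    rcases hall (T.leaf c) with hc'' | hc''
  · exact two ha hbX (Ne.symm hba) (ha'.trans hb''.symm)
  · exact two ha hbX (Ne.symm hba) (ha'.trans hb''.symm)
  · exact two ha hcX (Ne.symm hca) (ha'.trans hc''.symm)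
  · exact two hbX hcX (Ne.symm hcb) (hb''.trans hc''.symm)
  · exact two hbX hcX (Ne.symm hcb) (hb''.trans hc''.symm)
  · exact two ha hcX (Ne.symm hca) (ha'.trans hc''.symm)
  · exact two ha hbX (Ne.symm hba) (ha'.trans hb''.symm)
  · exact two ha hbX (Ne.symm hba) (ha'.trans hb''.symm)

lemma second_nbr {u y1 : T.V} (hint : ∀ x ∈ X, T.leaf x ≠ u) (h1 : T.G.Adj u y1) :
    ∃ n, T.G.Adj u n ∧ n ≠ y1 := by
  by_contra h
  push_neg at h
  have hsub : T.G.neighborSet u ⊆ ({y1} : Set T.V) := fun z hz => h z hz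
  have hle := Set.ncard_le_ncard hsub (Set.toFinite _)
  rw [T.internal_degree u hint, Set.ncard_singleton] at hle
  omega

lemma third_nbr {u y1 y2 : T.V} (hint : ∀ x ∈ X, T.leaf x ≠ u)
    (h1 : T.G.Adj u y1) (h2 : T.G.Adj u y2) (hne : y1 ≠ y2) :
    ∃ n0, T.G.Adj u n0 ∧ n0 ≠ y1 ∧ n0 ≠ y2 := by
  by_contra h
  push_neg at h
  have hsub : T.G.neighborSet u ⊆ ({y1, y2} : Set T.V) := by
    intro z hz
    by_cases hz1 : z = y1
    · exact Or.inl hz1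
    · exact Or.inr (h z hz hz1)
  have hle := Set.ncard_le_ncard hsub (Set.toFinite _)
  have h2' : ({y1, y2} : Set T.V).ncard ≤ 2 := by
    refine le_trans (Set.ncard_insert_le _ _) ?_
    rw [Set.ncard_singleton]
  rw [T.internal_degree u hint] at hle
  omega

lemma dir_self_of_adj {u n : T.V} (h : T.G.Adj u n) : T.dir u n = n :=
  (T.dir_eq h (by rw [SimpleGraph.dist_self, T.adj_dist_one h])).symm

/-- an adjacency from a leaf is preserved by `phi` -/
lemma phi_adj_leaf {T T' : PhyloTree X} (hX : 3 ≤ X.card) (HA : AgreeAll T T') {p : α}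
    (hp : p ∈ X) {w : T.V} (hadj : T.G.Adj (T.leaf p) w) :
    T'.G.Adj (T'.leaf p) (phi T T' w) := by
  have hw_int : ∀ x ∈ X, T.leaf x ≠ w := by
    intro x hx he
    exact T.no_adjacent_leaves hX hp hx (he ▸ hadj)
  obtain ⟨n2, han2, hn2v⟩ := T.second_nbr hw_int hadj.symm
  obtain ⟨n3, han3, hn3v, hn3n2⟩ := T.third_nbr hw_int hadj.symm han2 (Ne.symm hn2v)
  obtain ⟨q, hq, hbq⟩ := T.exists_leaf_dir han2
  obtain ⟨r, hr, hbr⟩ := T.exists_leaf_dir han3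
  have hdirP : T.dir w (T.leaf p) = T.leaf p := T.dir_self_of_adj hadj.symm
  have hdirQ : T.dir w (T.leaf q) = n2 := by
    rw [← T.dir_of_btw hbq han2.ne']
    exact T.dir_self_of_adj han2
  have hdirR : T.dir w (T.leaf r) = n3 := by
    rw [← T.dir_of_btw hbr han3.ne']
    exact T.dir_self_of_adj han3
  have hpw : T.leaf p ≠ w := hadj.ne
  have hqp : q ≠ p := by
    intro he
    exact hn2v (by rw [← hdirQ, he, hdirP])
  have hrp : r ≠ p := by
    intro he
    exact hn3v (by rw [← hdirR, he, hdirP])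
  have hqr : q ≠ r := by
    intro he
    exact hn3n2 (by rw [← hdirR, ← he, hdirQ])
  have hBPQ : T.Btw (T.leaf p) w (T.leaf q) :=
    T.btw_of_dir_ne hpw (hw_int q hq) (by rw [hdirP, hdirQ]; exact fun h => hn2v h.symm)
  have hBPR : T.Btw (T.leaf p) w (T.leaf r) :=
    T.btw_of_dir_ne hpw (hw_int r hr) (by rw [hdirP, hdirR]; exact fun h => hn3v h.symm)
  have hBQR : T.Btw (T.leaf q) w (T.leaf r) :=
    T.btw_of_dir_ne (hw_int q hq) (hw_int r hr)
      (by rw [hdirQ, hdirR]; exact Ne.symm hn3n2)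
  have hw : T.med (T.leaf p) (T.leaf q) (T.leaf r) = w := (T.eq_med ⟨hBPQ, hBPR, hBQR⟩).symm
  have hphiw : phi T T' w = T'.med (T'.leaf p) (T'.leaf q) (T'.leaf r) := by
    rw [← hw]; exact phi_med HA hp hq hr
  rw [hphiw]
  set w' := T'.med (T'.leaf p) (T'.leaf q) (T'.leaf r) with hw'def
  have hint' := T'.med_leaves_internal hp hq hr (Ne.symm hqp) (Ne.symm hrp) hqr
  have hne0 : T'.leaf p ≠ w' := hint' p hp
  have hd0 : T'.G.dist (T'.leaf p) w' ≠ 0 := fun h => hne0 (T'.dist_eq_zero h)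
  rcases Nat.lt_or_ge (T'.G.dist (T'.leaf p) w') 2 with hlt | hge
  · exact SimpleGraph.dist_eq_one_iff_adj.1 (by omega)
  exfalso
  set u := T'.dir (T'.leaf p) w' with hu
  have hspec := T'.dir_spec hne0
  rw [← hu] at hspec
  have hBu : T'.Btw (T'.leaf p) u w' := by
    unfold Btw; rw [T'.adj_dist_one hspec.1]; omega
  have huP : u ≠ T'.leaf p := hspec.1.ne'
  have huw' : u ≠ w' := by
    intro he
    have h2 := hspec.2
    rw [he, SimpleGraph.dist_self] at h2
    omega
  
  have hu_int : ∀ x ∈ X, T'.leaf x ≠ u :=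
    T'.not_leaf_of_two_nbrs (T'.dir_adj huP) (T'.dir_adj huw')
      (T'.dir_ne hBu (Ne.symm huP) (Ne.symm huw'))
  obtain ⟨n0, han0, hn0P, hn0W⟩ := T'.third_nbr hu_int (T'.dir_adj huP)
    (T'.dir_adj huw') (T'.dir_ne hBu (Ne.symm huP) (Ne.symm huw'))
  obtain ⟨s, hs, hbs⟩ := T'.exists_leaf_dir han0
  have hdirS : T'.dir u (T'.leaf s) = n0 := by
    rw [← T'.dir_of_btw hbs han0.ne']
    exact T'.dir_self_of_adj han0
  have sw' := T'.med_spec (T'.leaf p) (T'.leaf q) (T'.leaf r)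
  rw [← hw'def] at sw'
  have hBuQ : T'.Btw (T'.leaf p) u (T'.leaf q) := by
    have h1 := hBu; have h2 := sw'.1
    have t1 : T'.G.dist (T'.leaf p) (T'.leaf q) ≤
        T'.G.dist (T'.leaf p) u + T'.G.dist u (T'.leaf q) := T'.connected.dist_triangle
    have t2 : T'.G.dist u (T'.leaf q) ≤
        T'.G.dist u w' + T'.G.dist w' (T'.leaf q) := T'.connected.dist_triangle
    unfold Btw at *; omega
  have hBwQ : T'.Btw u w' (T'.leaf q) := by
    have h1 := hBu; have h2 := sw'.1; have h3 := hBuQ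
    unfold Btw at *; omega
  have hBwR : T'.Btw u w' (T'.leaf r) := by
    have h1 := hBu; have h2 := sw'.2.1
    have t1 : T'.G.dist (T'.leaf p) (T'.leaf r) ≤
        T'.G.dist (T'.leaf p) u + T'.G.dist u (T'.leaf r) := T'.connected.dist_triangle
    have t2 : T'.G.dist u (T'.leaf r) ≤
        T'.G.dist u w' + T'.G.dist w' (T'.leaf r) := T'.connected.dist_triangle
    unfold Btw at *; omega
  have hdirQ' : T'.dir u (T'.leaf q) = T'.dir u w' := (T'.dir_of_btw hBwQ (Ne.symm huw')).symm
  have hdirR' : T'.dir u (T'.leaf r) = T'.dir u w' := (T'.dir_of_btw hBwR (Ne.symm huw')).symm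
  have hdirP' : T'.dir u (T'.leaf p) = T'.dir u (T'.leaf p) := rfl
  have hsp : s ≠ p := by
    intro he
    exact hn0P (by rw [← hdirS, he])
  have hsq : s ≠ q := by
    intro he
    exact hn0W (by rw [← hdirS, he, hdirQ'])
  have hsr : s ≠ r := by
    intro he
    exact hn0W (by rw [← hdirS, he, hdirR'])
  have hSu : T'.leaf s ≠ u := hu_int s hs
  have hQu : T'.leaf q ≠ u := by
    intro he
    unfold Btw at hBwQ
    rw [he, SimpleGraph.dist_self] at hBwQ
    have c1 := T'.dcomm u w'
    exact huw' (T'.dist_eq_zero (by omega))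
  have hBPuS : T'.Btw (T'.leaf p) u (T'.leaf s) :=
    T'.btw_of_dir_ne (Ne.symm huP) hSu (by rw [hdirS]; exact Ne.symm hn0P)
  have hBQuS : T'.Btw (T'.leaf q) u (T'.leaf s) :=
    T'.btw_of_dir_ne hQu hSu (by rw [hdirS, hdirQ']; exact Ne.symm hn0W)
  have hu_med : T'.med (T'.leaf p) (T'.leaf q) (T'.leaf s) = u :=
    (T'.eq_med ⟨hBuQ, hBPuS, hBQuS⟩).symm
  have hres' : T'.ResolvesAs p s q r := by
    refine T'.resolves_of_order hp hq hs hr (Ne.symm hqp) (Ne.symm hsp) (Ne.symm hrp)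
      (Ne.symm hsq) hqr hsr ?_ ?_
    · rw [hu_med, ← hw'def]; exact huw'
    · rw [hu_med, ← hw'def]; exact hBu
  have hres : T.ResolvesAs p s q r :=
    (HA p s q r hp hs hq hr (Ne.symm hsp) (Ne.symm hqp) (Ne.symm hrp) hsq hsr hqr).2 hres'
  have hwPS : T.Btw (T.leaf p) w (T.leaf s) := by
    have hSP : T.leaf s ≠ T.leaf p := T.leaf_ne hs hp hsp
    have hds := (T.dir_spec (Ne.symm hSP)).2
    have hdw : T.dir (T.leaf p) (T.leaf s) = w :=
      T.leaf_unique_nbr hp (T.dir_adj (Ne.symm hSP)) hadj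
    rw [hdw] at hds
    unfold Btw
    rw [T.adj_dist_one hadj]
    omega
  exact T.resolves_pths hres w (T.btw_iff_mem.1 hwPS) (T.btw_iff_mem.1 hBQR)


lemma order_insert {p q c1 c2 : α}
    (hp : p ∈ X) (hq : q ∈ X) (hc1 : c1 ∈ X) (hc2 : c2 ∈ X)
    (hpq : p ≠ q) (hpc1 : p ≠ c1) (hpc2 : p ≠ c2) (hqc1 : q ≠ c1) (hqc2 : q ≠ c2)
    (hc12 : c1 ≠ c2)
    (hord : T.Btw (T.leaf p) (T.med (T.leaf p) (T.leaf q) (T.leaf c1))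
      (T.med (T.leaf p) (T.leaf q) (T.leaf c2)))
    (hge : 2 ≤ T.G.dist (T.med (T.leaf p) (T.leaf q) (T.leaf c1))
      (T.med (T.leaf p) (T.leaf q) (T.leaf c2))) :
    ∃ s ∈ X, s ≠ p ∧ s ≠ q ∧ s ≠ c1 ∧ s ≠ c2 ∧
      T.ResolvesAs p c1 q s ∧ T.ResolvesAs p s q c2 := by
  set m1 := T.med (T.leaf p) (T.leaf q) (T.leaf c1) with hm1
  set m2 := T.med (T.leaf p) (T.leaf q) (T.leaf c2) with hm2
  have s1 := T.med_spec (T.leaf p) (T.leaf q) (T.leaf c1)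
  rw [← hm1] at s1
  have s2 := T.med_spec (T.leaf p) (T.leaf q) (T.leaf c2)
  rw [← hm2] at s2
  have hne : m1 ≠ m2 := by
    intro he
    rw [he, SimpleGraph.dist_self] at hge
    omega
  set u := T.dir m1 m2 with hu
  have hspec := T.dir_spec hne
  rw [← hu] at hspec
  have hBmu : T.Btw m1 u m2 := by
    unfold Btw; rw [T.adj_dist_one hspec.1]; omega
  have hum1 : u ≠ m1 := hspec.1.ne'
  have hum2 : u ≠ m2 := by
    intro he
    have h2 := hspec.2
    rw [he, SimpleGraph.dist_self] at h2
    omega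
  have hBpmu : T.Btw (T.leaf p) m1 u := by
    have h1 := hord
    have t1 : T.G.dist (T.leaf p) u ≤ T.G.dist (T.leaf p) m1 + T.G.dist m1 u :=
      T.connected.dist_triangle
    have t2 : T.G.dist (T.leaf p) m2 ≤ T.G.dist (T.leaf p) u + T.G.dist u m2 :=
      T.connected.dist_triangle
    unfold Btw at *; omega
  have hBpum2 : T.Btw (T.leaf p) u m2 := by
    have h1 := hord
    unfold Btw at *; omega
  have hBpuQ : T.Btw (T.leaf p) u (T.leaf q) := by
    have h1 := hBpum2; have h2 := s2.1
    have t1 : T.G.dist (T.leaf p) (T.leaf q) ≤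
        T.G.dist (T.leaf p) u + T.G.dist u (T.leaf q) := T.connected.dist_triangle
    have t2 : T.G.dist u (T.leaf q) ≤ T.G.dist u m2 + T.G.dist m2 (T.leaf q) :=
      T.connected.dist_triangle
    unfold Btw at *; omega
  have hBum2Q : T.Btw u m2 (T.leaf q) := by
    have h1 := hBpum2; have h2 := s2.1; have h3 := hBpuQ
    unfold Btw at *; omega
  have hBum1P : T.Btw u m1 (T.leaf p) := T.btw_symm hBpmu
  have hdne : T.dir u m1 ≠ T.dir u m2 :=
    T.dir_ne hBmu (Ne.symm hum1) (Ne.symm hum2)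
  have hu_int : ∀ x ∈ X, T.leaf x ≠ u :=
    T.not_leaf_of_two_nbrs (T.dir_adj hum1) (T.dir_adj hum2) hdne
  obtain ⟨n0, han0, hn0m1, hn0m2⟩ := T.third_nbr hu_int (T.dir_adj hum1) (T.dir_adj hum2) hdne
  obtain ⟨s, hs, hbs⟩ := T.exists_leaf_dir han0
  have hdirS : T.dir u (T.leaf s) = n0 := by
    rw [← T.dir_of_btw hbs han0.ne']
    exact T.dir_self_of_adj han0
  have hdirP : T.dir u (T.leaf p) = T.dir u m1 :=
    (T.dir_of_btw hBum1P (Ne.symm hum1)).symm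
  have hdirQ : T.dir u (T.leaf q) = T.dir u m2 :=
    (T.dir_of_btw hBum2Q (Ne.symm hum2)).symm
  have hdirC1 : T.dir u (T.leaf c1) = T.dir u m1 := by
    have hproj : T.Btw (T.leaf c1) m1 u := T.proj s1 hBpuQ
    exact (T.dir_of_btw (T.btw_symm hproj) (Ne.symm hum1)).symm
  have hdirC2 : T.dir u (T.leaf c2) = T.dir u m2 := by
    have hproj : T.Btw (T.leaf c2) m2 u := T.proj s2 hBpuQ
    exact (T.dir_of_btw (T.btw_symm hproj) (Ne.symm hum2)).symm
  have hsp : s ≠ p := fun he => hn0m1 (by rw [← hdirS, he, hdirP])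
  have hsq : s ≠ q := fun he => hn0m2 (by rw [← hdirS, he, hdirQ])
  have hsc1 : s ≠ c1 := fun he => hn0m1 (by rw [← hdirS, he, hdirC1])
  have hsc2 : s ≠ c2 := fun he => hn0m2 (by rw [← hdirS, he, hdirC2])
  have hSu : T.leaf s ≠ u := hu_int s hs
  have hdum1 : T.G.dist u m1 = 1 := by rw [T.dcomm u m1]; exact T.adj_dist_one hspec.1
  have hPu : T.leaf p ≠ u := by
    intro he
    unfold Btw at hBpmu
    rw [← he] at hBpmu
    rw [SimpleGraph.dist_self] at hBpmu
    have c1' := T.dcomm (T.leaf p) m1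
    have c2' := T.dcomm m1 u
    rw [← he] at hdum1
    omega
  have hQu : T.leaf q ≠ u := by
    intro he
    unfold Btw at hBum2Q
    rw [he, SimpleGraph.dist_self] at hBum2Q
    have h2 := hspec.2
    omega
  have hBPuS : T.Btw (T.leaf p) u (T.leaf s) :=
    T.btw_of_dir_ne hPu hSu (by rw [hdirP, hdirS]; exact Ne.symm hn0m1)
  have hBQuS : T.Btw (T.leaf q) u (T.leaf s) :=
    T.btw_of_dir_ne hQu hSu (by rw [hdirQ, hdirS]; exact Ne.symm hn0m2)
  have hu_med : T.med (T.leaf p) (T.leaf q) (T.leaf s) = u :=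
    (T.eq_med ⟨hBpuQ, hBPuS, hBQuS⟩).symm
  refine ⟨s, hs, hsp, hsq, hsc1, hsc2, ?_, ?_⟩
  · refine T.resolves_of_order hp hq hc1 hs hpq hpc1 (Ne.symm hsp) hqc1 (Ne.symm hsq)
      (Ne.symm hsc1) ?_ ?_
    · rw [hu_med, ← hm1]; exact fun h => hum1 h.symm
    · rw [hu_med, ← hm1]; exact hBpmu
  · refine T.resolves_of_order hp hq hs hc2 hpq (Ne.symm hsp) hpc2 (Ne.symm hsq) hqc2
      hsc2 ?_ ?_
    · rw [hu_med, ← hm2]; exact hum2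
    · rw [hu_med, ← hm2]; exact hBpum2


lemma phi_adj_internal {T T' : PhyloTree X} (HA : AgreeAll T T') {v w : T.V}
    (hadj : T.G.Adj v w)
    (hv_int : ∀ x ∈ X, T.leaf x ≠ v) (hw_int : ∀ x ∈ X, T.leaf x ≠ w) :
    T'.G.Adj (phi T T' v) (phi T T' w) := by
  obtain ⟨a2, ha2, ha2w⟩ := T.second_nbr hv_int hadj
  obtain ⟨a3, ha3, ha3w, ha3a2⟩ := T.third_nbr hv_int hadj ha2 (Ne.symm ha2w)
  obtain ⟨b2, hb2, hb2v⟩ := T.second_nbr hw_int hadj.symm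
  obtain ⟨b3, hb3, hb3v, hb3b2⟩ := T.third_nbr hw_int hadj.symm hb2 (Ne.symm hb2v)
  obtain ⟨x1, hx1, hbx1⟩ := T.exists_leaf_dir ha2
  obtain ⟨x2, hx2, hbx2⟩ := T.exists_leaf_dir ha3
  obtain ⟨x3, hx3, hbx3⟩ := T.exists_leaf_dir hb2
  obtain ⟨x4, hx4, hbx4⟩ := T.exists_leaf_dir hb3
  have hd1 : T.dir v (T.leaf x1) = a2 := by
    rw [← T.dir_of_btw hbx1 ha2.ne']; exact T.dir_self_of_adj ha2
  have hd2 : T.dir v (T.leaf x2) = a3 := by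
    rw [← T.dir_of_btw hbx2 ha3.ne']; exact T.dir_self_of_adj ha3
  have hd3w : T.dir w (T.leaf x3) = b2 := by
    rw [← T.dir_of_btw hbx3 hb2.ne']; exact T.dir_self_of_adj hb2
  have hd4w : T.dir w (T.leaf x4) = b3 := by
    rw [← T.dir_of_btw hbx4 hb3.ne']; exact T.dir_self_of_adj hb3
  have hdvw : T.dir v w = w := T.dir_self_of_adj hadj
  have hdwv : T.dir w v = v := T.dir_self_of_adj hadj.symm
  have hX1v : T.leaf x1 ≠ v := hv_int x1 hx1
  have hX2v : T.leaf x2 ≠ v := hv_int x2 hx2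
  have hX3v : T.leaf x3 ≠ v := hv_int x3 hx3
  have hX4v : T.leaf x4 ≠ v := hv_int x4 hx4
  have hX1w : T.leaf x1 ≠ w := hw_int x1 hx1
  have hX2w : T.leaf x2 ≠ w := hw_int x2 hx2
  have hX3w : T.leaf x3 ≠ w := hw_int x3 hx3
  have hX4w : T.leaf x4 ≠ w := hw_int x4 hx4
  -- X3, X4 are on the w-side of v ; X1, X2 on the v-side of w
  have hBvw3 : T.Btw v w (T.leaf x3) := by
    rcases T.adj_dist_cases (v := T.leaf x3) hadj with hcase | hcase
    · unfold Btw
      rw [T.adj_dist_one hadj]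
      rw [T.dcomm v (T.leaf x3), T.dcomm w (T.leaf x3)]
      omega
    · exfalso
      have hv' : v = T.dir w (T.leaf x3) := T.dir_eq hadj.symm (by
        rw [T.dcomm v (T.leaf x3), T.dcomm w (T.leaf x3)]; omega)
      rw [hd3w] at hv'
      exact hb2v hv'.symm
  have hBvw4 : T.Btw v w (T.leaf x4) := by
    rcases T.adj_dist_cases (v := T.leaf x4) hadj with hcase | hcase
    · unfold Btw
      rw [T.adj_dist_one hadj]
      rw [T.dcomm v (T.leaf x4), T.dcomm w (T.leaf x4)]
      omega
    · exfalso
      have hv' : v = T.dir w (T.leaf x4) := T.dir_eq hadj.symm (by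
        rw [T.dcomm v (T.leaf x4), T.dcomm w (T.leaf x4)]; omega)
      rw [hd4w] at hv'
      exact hb3v hv'.symm
  have hBwv1 : T.Btw w v (T.leaf x1) := by
    rcases T.adj_dist_cases (v := T.leaf x1) hadj.symm with hcase | hcase
    · unfold Btw
      rw [T.adj_dist_one hadj.symm]
      rw [T.dcomm w (T.leaf x1), T.dcomm v (T.leaf x1)]
      omega
    · exfalso
      have hw' : w = T.dir v (T.leaf x1) := T.dir_eq hadj (by
        rw [T.dcomm w (T.leaf x1), T.dcomm v (T.leaf x1)]; omega)
      rw [hd1] at hw'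
      exact ha2w hw'.symm
  have hBwv2 : T.Btw w v (T.leaf x2) := by
    rcases T.adj_dist_cases (v := T.leaf x2) hadj.symm with hcase | hcase
    · unfold Btw
      rw [T.adj_dist_one hadj.symm]
      rw [T.dcomm w (T.leaf x2), T.dcomm v (T.leaf x2)]
      omega
    · exfalso
      have hw' : w = T.dir v (T.leaf x2) := T.dir_eq hadj (by
        rw [T.dcomm w (T.leaf x2), T.dcomm v (T.leaf x2)]; omega)
      rw [hd2] at hw'
      exact ha3w hw'.symm
  have hd3v : T.dir v (T.leaf x3) = w := (T.dir_of_btw hBvw3 hadj.ne').symm.trans hdvw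
  have hd4v : T.dir v (T.leaf x4) = w := (T.dir_of_btw hBvw4 hadj.ne').symm.trans hdvw
  have hd1w : T.dir w (T.leaf x1) = v := (T.dir_of_btw hBwv1 hadj.ne).symm.trans hdwv
  have hd2w : T.dir w (T.leaf x2) = v := (T.dir_of_btw hBwv2 hadj.ne).symm.trans hdwv
  have ne12 : x1 ≠ x2 := fun he => ha3a2 (by rw [← hd2, ← he]; exact hd1)
  have ne13 : x1 ≠ x3 := fun he => ha2w (by rw [← hd1, he]; exact hd3v)
  have ne14 : x1 ≠ x4 := fun he => ha2w (by rw [← hd1, he]; exact hd4v)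
  have ne23 : x2 ≠ x3 := fun he => ha3w (by rw [← hd2, he]; exact hd3v)
  have ne24 : x2 ≠ x4 := fun he => ha3w (by rw [← hd2, he]; exact hd4v)
  have ne34 : x3 ≠ x4 := fun he => hb3b2 (by rw [← hd4w, ← he]; exact hd3w)
  have hIv3 : T.IsMed v (T.leaf x1) (T.leaf x2) (T.leaf x3) :=
    ⟨T.btw_of_dir_ne hX1v hX2v (by rw [hd1, hd2]; exact Ne.symm ha3a2),
     T.btw_of_dir_ne hX1v hX3v (by rw [hd1, hd3v]; exact ha2w),
     T.btw_of_dir_ne hX2v hX3v (by rw [hd2, hd3v]; exact ha3w)⟩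
  have hIw1 : T.IsMed w (T.leaf x3) (T.leaf x4) (T.leaf x1) :=
    ⟨T.btw_of_dir_ne hX3w hX4w (by rw [hd3w, hd4w]; exact Ne.symm hb3b2),
     T.btw_of_dir_ne hX3w hX1w (by rw [hd3w, hd1w]; exact hb2v),
     T.btw_of_dir_ne hX4w hX1w (by rw [hd4w, hd1w]; exact hb3v)⟩
  have hv_med : T.med (T.leaf x1) (T.leaf x2) (T.leaf x3) = v := (T.eq_med hIv3).symm
  have hw_med : T.med (T.leaf x3) (T.leaf x4) (T.leaf x1) = w := (T.eq_med hIw1).symm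
  have hphiv : phi T T' v = T'.med (T'.leaf x1) (T'.leaf x2) (T'.leaf x3) := by
    rw [← hv_med]; exact phi_med HA hx1 hx2 hx3
  have hphiw : phi T T' w = T'.med (T'.leaf x3) (T'.leaf x4) (T'.leaf x1) := by
    rw [← hw_med]; exact phi_med HA hx3 hx4 hx1
  rw [hphiv, hphiw]
  set v' := T'.med (T'.leaf x1) (T'.leaf x2) (T'.leaf x3) with hv'def
  set w' := T'.med (T'.leaf x3) (T'.leaf x4) (T'.leaf x1) with hw'def
  have hvw' : v' ≠ w' := by
    intro he
    apply hadj.ne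
    have h1 := phi_phi HA v
    have h2 := phi_phi HA w
    rw [← h1, ← h2, hphiv, hphiw, he]
  have sv' := T'.med_spec (T'.leaf x1) (T'.leaf x2) (T'.leaf x3)
  rw [← hv'def] at sv'
  have sw' := T'.med_spec (T'.leaf x3) (T'.leaf x4) (T'.leaf x1)
  rw [← hw'def] at sw'
  have hB1v3 : T'.Btw (T'.leaf x1) v' (T'.leaf x3) := sv'.2.1
  have hB1w3 : T'.Btw (T'.leaf x1) w' (T'.leaf x3) := T'.btw_symm sw'.2.1
  have hdvw0 : T'.G.dist v' w' ≠ 0 := fun h => hvw' (T'.dist_eq_zero h)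
  rcases Nat.lt_or_ge (T'.G.dist v' w') 2 with hlt | hge
  · exact SimpleGraph.dist_eq_one_iff_adj.1 (by omega)
  exfalso
  have hv'm : T'.med (T'.leaf x1) (T'.leaf x3) (T'.leaf x2) = v' :=
    (T'.eq_med (T'.isMed_swap23 sv')).symm
  have hw'm : T'.med (T'.leaf x1) (T'.leaf x3) (T'.leaf x4) = w' := by
    refine (T'.eq_med ?_).symm
    exact ⟨T'.btw_symm sw'.2.1, T'.btw_symm sw'.2.2, sw'.1⟩
  rcases T'.btw_compare hB1v3 hB1w3 with hord | hord
  · -- v' before w' : use c1 = x2, c2 = x4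
    obtain ⟨s, hs, hs1, hs3, hs2, hs4, hr1', hr2'⟩ :=
      T'.order_insert hx1 hx3 hx2 hx4 ne13 ne12 ne14 (Ne.symm ne23) ne34
        ne24 (by rw [hv'm, hw'm]; exact hord) (by rw [hv'm, hw'm]; exact hge)
    have hr1 : T.ResolvesAs x1 x2 x3 s :=
      (HA x1 x2 x3 s hx1 hx2 hx3 hs ne12 ne13 (Ne.symm hs1) ne23 (Ne.symm hs2)
        (Ne.symm hs3)).2 hr1'
    have hr2 : T.ResolvesAs x1 s x3 x4 :=
      (HA x1 s x3 x4 hx1 hs hx3 hx4 (Ne.symm hs1) ne13 ne14 hs3 hs4 ne34).2 hr2'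
    have hSv : T.leaf s ≠ v := hv_int s hs
    have hSw : T.leaf s ≠ w := hw_int s hs
    have hmedS : T.med (T.leaf x1) (T.leaf x2) (T.leaf s) = v := by
      have h0 := T.med_eq_of_resolves hx1 hx2 hx3 hs hr1
      rw [hv_med] at h0
      exact h0.symm
    have hIvS : T.IsMed v (T.leaf x1) (T.leaf x2) (T.leaf s) := by
      rw [← hmedS]; exact T.med_spec _ _ _
    have hdvS : T.dir v (T.leaf s) = w := by
      rcases T.nbr_cases hv_int ha2 ha3 hadj (Ne.symm ha3a2) ha2w ha3w
          (T.dir_adj (Ne.symm hSv)) with h | h | h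
      · exact absurd (by rw [hd1, h] : T.dir v (T.leaf x1) = T.dir v (T.leaf s))
          (T.dir_ne hIvS.2.1 hX1v hSv)
      · exact absurd (by rw [hd2, h] : T.dir v (T.leaf x2) = T.dir v (T.leaf s))
          (T.dir_ne hIvS.2.2 hX2v hSv)
      · exact h
    have hBvwS : T.Btw v w (T.leaf s) := by
      have hds := (T.dir_spec (Ne.symm hSv)).2
      rw [hdvS] at hds
      unfold Btw
      rw [T.adj_dist_one hadj]
      omega
    have hdwS_ne_v : T.dir w (T.leaf s) ≠ v := by
      intro h
      have hds := (T.dir_spec (Ne.symm hSw)).2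
      rw [h] at hds
      unfold Btw at hBvwS
      rw [T.adj_dist_one hadj] at hBvwS
      have c1 := T.dcomm v (T.leaf s)
      omega
    have hmed2 := T.med_eq_of_resolves hx1 hs hx3 hx4 hr2
    rcases T.nbr_cases hw_int hadj.symm hb2 hb3 (Ne.symm hb2v) (Ne.symm hb3v)
        (Ne.symm hb3b2) (T.dir_adj (Ne.symm hSw)) with h | h | h
    · exact hdwS_ne_v h
    · -- dir w S = b2 : med X1 S X4 = w but med X1 S X3 ≠ w
      have hIw4S : T.IsMed w (T.leaf x1) (T.leaf s) (T.leaf x4) :=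
        ⟨T.btw_of_dir_ne hX1w hSw (by rw [hd1w, h]; exact Ne.symm hb2v),
         T.btw_of_dir_ne hX1w hX4w (by rw [hd1w, hd4w]; exact Ne.symm hb3v),
         T.btw_of_dir_ne hSw hX4w (by rw [h, hd4w]; exact Ne.symm hb3b2)⟩
      have h14 : T.med (T.leaf x1) (T.leaf s) (T.leaf x4) = w := (T.eq_med hIw4S).symm
      rw [h14] at hmed2
      have hI13 : T.IsMed w (T.leaf x1) (T.leaf s) (T.leaf x3) := by
        rw [← hmed2]; exact T.med_spec _ _ _
      exact T.dir_ne hI13.2.2 hSw hX3w (by rw [h, hd3w])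
    · -- dir w S = b3 : med X1 S X3 = w but med X1 S X4 ≠ w
      have hIw3S : T.IsMed w (T.leaf x1) (T.leaf s) (T.leaf x3) :=
        ⟨T.btw_of_dir_ne hX1w hSw (by rw [hd1w, h]; exact Ne.symm hb3v),
         T.btw_of_dir_ne hX1w hX3w (by rw [hd1w, hd3w]; exact Ne.symm hb2v),
         T.btw_of_dir_ne hSw hX3w (by rw [h, hd3w]; exact hb3b2)⟩
      have h13 : T.med (T.leaf x1) (T.leaf s) (T.leaf x3) = w := (T.eq_med hIw3S).symm
      rw [h13] at hmed2
      have hI14 : T.IsMed w (T.leaf x1) (T.leaf s) (T.leaf x4) := by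
        rw [hmed2]; exact T.med_spec _ _ _
      exact T.dir_ne hI14.2.2 hSw hX4w (by rw [h, hd4w])
  · -- w' before v' : use c1 = x4, c2 = x2
    obtain ⟨s, hs, hs1, hs3, hs4, hs2, hr1', hr2'⟩ :=
      T'.order_insert hx1 hx3 hx4 hx2 ne13 ne14 ne12 ne34 (Ne.symm ne23)
        (Ne.symm ne24) (by rw [hv'm, hw'm]; exact hord)
        (by rw [hv'm, hw'm]; rw [T'.dcomm v' w'] at hge; exact hge)
    have hr1 : T.ResolvesAs x1 x4 x3 s :=
      (HA x1 x4 x3 s hx1 hx4 hx3 hs ne14 ne13 (Ne.symm hs1) (Ne.symm ne34)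
        (Ne.symm hs4) (Ne.symm hs3)).2 hr1'
    have hr2 : T.ResolvesAs x1 s x3 x2 :=
      (HA x1 s x3 x2 hx1 hs hx3 hx2 (Ne.symm hs1) ne13 ne12 hs3 hs2 (Ne.symm ne23)).2 hr2'
    have hSv : T.leaf s ≠ v := hv_int s hs
    have hSw : T.leaf s ≠ w := hw_int s hs
    have hIw14 : T.IsMed w (T.leaf x1) (T.leaf x4) (T.leaf x3) :=
      ⟨T.btw_of_dir_ne hX1w hX4w (by rw [hd1w, hd4w]; exact Ne.symm hb3v),
       T.btw_of_dir_ne hX1w hX3w (by rw [hd1w, hd3w]; exact Ne.symm hb2v),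
       T.btw_of_dir_ne hX4w hX3w (by rw [hd4w, hd3w]; exact hb3b2)⟩
    have hmedS : T.med (T.leaf x1) (T.leaf x4) (T.leaf s) = w := by
      have h0 := T.med_eq_of_resolves hx1 hx4 hx3 hs hr1
      rw [← T.eq_med hIw14] at h0
      exact h0.symm
    have hIwS : T.IsMed w (T.leaf x1) (T.leaf x4) (T.leaf s) := by
      rw [← hmedS]; exact T.med_spec _ _ _
    have hdwS : T.dir w (T.leaf s) = b2 := by
      rcases T.nbr_cases hw_int hadj.symm hb2 hb3 (Ne.symm hb2v) (Ne.symm hb3v)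
          (Ne.symm hb3b2) (T.dir_adj (Ne.symm hSw)) with h | h | h
      · exact absurd (by rw [hd1w, h] : T.dir w (T.leaf x1) = T.dir w (T.leaf s))
          (T.dir_ne hIwS.2.1 hX1w hSw)
      · exact h
      · exact absurd (by rw [hd4w, h] : T.dir w (T.leaf x4) = T.dir w (T.leaf s))
          (T.dir_ne hIwS.2.2 hX4w hSw)
    have hBvwS : T.Btw v w (T.leaf s) := by
      rcases T.adj_dist_cases (v := T.leaf s) hadj with hcase | hcase
      · unfold Btw
        rw [T.adj_dist_one hadj]
        rw [T.dcomm v (T.leaf s), T.dcomm w (T.leaf s)]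
        omega
      · exfalso
        have hv2 : v = T.dir w (T.leaf s) := T.dir_eq hadj.symm (by
          rw [T.dcomm v (T.leaf s), T.dcomm w (T.leaf s)]; omega)
        rw [hdwS] at hv2
        exact hb2v hv2.symm
    have hdvS : T.dir v (T.leaf s) = w := (T.dir_of_btw hBvwS hadj.ne').symm.trans hdvw
    have hIv1S2 : T.IsMed v (T.leaf x1) (T.leaf s) (T.leaf x2) :=
      ⟨T.btw_of_dir_ne hX1v hSv (by rw [hd1, hdvS]; exact ha2w),
       T.btw_of_dir_ne hX1v hX2v (by rw [hd1, hd2]; exact Ne.symm ha3a2),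
       T.btw_of_dir_ne hSv hX2v (by rw [hdvS, hd2]; exact Ne.symm ha3w)⟩
    have hmed2 := T.med_eq_of_resolves hx1 hs hx3 hx2 hr2
    have h12 : T.med (T.leaf x1) (T.leaf s) (T.leaf x2) = v := (T.eq_med hIv1S2).symm
    rw [h12] at hmed2
    have hI13 : T.IsMed v (T.leaf x1) (T.leaf s) (T.leaf x3) := by
      rw [← hmed2]; exact T.med_spec _ _ _
    exact T.dir_ne hI13.2.2 hSv hX3v (by rw [hdvS, hd3v])


lemma phi_adj {T T' : PhyloTree X} (hX : 3 ≤ X.card) (HA : AgreeAll T T') {v w : T.V}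
    (hadj : T.G.Adj v w) : T'.G.Adj (phi T T' v) (phi T T' w) := by
  by_cases hv : ∃ x ∈ X, T.leaf x = v
  · obtain ⟨p, hp, hpe⟩ := hv
    have h2 : T.G.Adj (T.leaf p) w := by rw [hpe]; exact hadj
    have := phi_adj_leaf hX HA hp h2
    rw [← hpe, phi_leaf HA hp]
    exact this
  · by_cases hw : ∃ x ∈ X, T.leaf x = w
    · obtain ⟨p, hp, hpe⟩ := hw
      have h2 : T.G.Adj (T.leaf p) v := by rw [hpe]; exact hadj.symm
      have := phi_adj_leaf hX HA hp h2
      rw [← hpe, phi_leaf HA hp]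
      exact this.symm
    · push_neg at hv hw
      exact phi_adj_internal HA hadj hv hw

lemma labelIso_of_agree {T T' : PhyloTree X} (hX : 3 ≤ X.card) (HA : AgreeAll T T') :
    PhyloTree.LabelIso T T' := by
  refine ⟨⟨⟨phi T T', phi T' T, phi_phi HA, phi_phi HA.symm'⟩, ?_⟩,
    fun x hx => phi_leaf HA hx⟩
  intro a b
  show T'.G.Adj (phi T T' a) (phi T T' b) ↔ T.G.Adj a b
  constructor
  · intro h
    have h2 := phi_adj hX HA.symm' h
    rwa [phi_phi HA a, phi_phi HA b] at h2
  · exact phi_adj hX HA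

end PhyloTree

theorem decisive_of_all_quartets_through_x0' {α : Type} [DecidableEq α]
    (X : Finset α) (hX : 4 ≤ X.card)
    (S : Set (Finset α)) (hS : ∀ Y ∈ S, Y ⊆ X)
    (x0 : α) (hx0 : x0 ∈ X)
    (h : ∀ q : Finset α, q ⊆ X → q.card = 4 → x0 ∈ q → q ∈ QSet S) :
    PhyloDecisive X S := by
  intro T T' hres
  have hX3 : 3 ≤ X.card := by omega
  have H0 : PhyloTree.Agree0 T T' x0 := by
    intro a b c d ha hb hc hd hab hac had hbc hbd hcd hx
    have hq : ({a, b, c, d} : Finset α) ∈ QSet S := by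
      apply h
      · intro y hy
        simp only [Finset.mem_insert, Finset.mem_singleton] at hy
        rcases hy with rfl | rfl | rfl | rfl <;> assumption
      · rw [Finset.card_insert_of_notMem (by simp [hab, hac, had]),
            Finset.card_insert_of_notMem (by simp [hbc, hbd]),
            Finset.card_insert_of_notMem (by simp [hcd]),
            Finset.card_singleton]
      · rcases hx with he | he | he | he <;> subst he <;> simp
    exact hres _ hq a b c d rfl
  have HA : PhyloTree.AgreeAll T T' := fun a b c d ha hb hc hd h1 h2 h3 h4 h5 h6 =>
    PhyloTree.agree_all hx0 H0 ha hb hc hd h1 h2 h3 h4 h5 h6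
  exact PhyloTree.labelIso_of_agree hX3 HA

/-- if every 4-element subset of `X` containing some fixed `x0 ∈ X` lies
in `Q_S`, then `S` is phylogenetically decisive for `X`. -/
theorem decisive_of_all_quartets_through_x0 {α : Type} [DecidableEq α]
    (X : Finset α) (hX : 4 ≤ X.card)
    (S : Set (Finset α)) (hS : ∀ Y ∈ S, Y ⊆ X)
    (x0 : α) (hx0 : x0 ∈ X)
    (h : ∀ q : Finset α, q ⊆ X → q.card = 4 → x0 ∈ q → q ∈ QSet S) :
    PhyloDecisive X S :=
  decisive_of_all_quartets_through_x0' X hX S hS x0 hx0 h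
end

section
/- Let Y1 and Y2 be finite sets with |Y1 ∩ Y2| ≥ 2, such that Y1 − Y2 and Y2 − Y1 are both nonempty, and let X = Y1 ∪ Y2. Then the collection S = {Y1, Y2} is not phylogenetically decisive for X. -/
namespace Cat

def fi (n i : ℕ) : ℕ := min (i - 1) (n - 3)

abbrev CatV (n : ℕ) := Fin n ⊕ Fin (n - 2)

def catAdj (n : ℕ) : CatV n → CatV n → Prop
  | .inl i, .inr j => (j : ℕ) = fi n i
  | .inr j, .inl i => (j : ℕ) = fi n i
  | .inr j, .inr k => (j : ℕ) + 1 = k ∨ (k : ℕ) + 1 = j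
  | .inl _, .inl _ => False

def catG (n : ℕ) : SimpleGraph (CatV n) where
  Adj := catAdj n
  symm := ⟨by rintro (i | j) (i' | j') h <;> simp only [catAdj] at * <;> tauto⟩
  loopless := ⟨by rintro (i | j) h <;> simp only [catAdj] at h <;> omega⟩

lemma fi_lt (n : ℕ) (hn : 4 ≤ n) (i : ℕ) : fi n i < n - 2 := by unfold fi; omega

lemma fi_mono (n : ℕ) {i j : ℕ} (h : i ≤ j) : fi n i ≤ fi n j := by unfold fi; omega

instance (n : ℕ) : DecidableRel (catG n).Adj := by
  rintro (i | j) (i' | j') <;> simp only [catG, catAdj] <;> infer_instance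

lemma adj_inl_inr {n : ℕ} {i : Fin n} {j : Fin (n-2)} :
    (catG n).Adj (.inl i) (.inr j) ↔ (j : ℕ) = fi n i := Iff.rfl
lemma adj_inr_inr {n : ℕ} {j k : Fin (n-2)} :
    (catG n).Adj (.inr j) (.inr k) ↔ (j : ℕ) + 1 = k ∨ (k : ℕ) + 1 = j := Iff.rfl

/-- neighbors of a leaf -/
lemma nbhd_leaf (n : ℕ) (hn : 4 ≤ n) (i : Fin n) :
    (catG n).neighborSet (.inl i) = {Sum.inr ⟨fi n i, fi_lt n hn i⟩} := by
  ext (i' | j) <;>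
    simp only [SimpleGraph.mem_neighborSet, Set.mem_singleton_iff, catG, catAdj] <;>
    constructor <;> intro h
  · exact h.elim
  · simp at h
  · exact congrArg Sum.inr (Fin.ext h)
  · rw [Sum.inr.injEq] at h; rw [h]

lemma leaf_ncard (n : ℕ) (hn : 4 ≤ n) (i : Fin n) :
    ((catG n).neighborSet (.inl i)).ncard = 1 := by
  rw [nbhd_leaf n hn i]; simp


lemma spine_ncard (n : ℕ) (hn : 4 ≤ n) (j : Fin (n - 2)) :
    ((catG n).neighborSet (.inr j)).ncard = 3 := by
  rcases Nat.lt_or_ge 0 j.val with h0 | h0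
  · rcases Nat.lt_or_ge j.val (n - 3) with h1 | h1
    · -- middle
      have : (catG n).neighborSet (.inr j) =
          {Sum.inl ⟨j.val + 1, by omega⟩, Sum.inr ⟨j.val - 1, by omega⟩,
           Sum.inr ⟨j.val + 1, by omega⟩} := by
        ext (i | k) <;>
          simp [SimpleGraph.mem_neighborSet, catG, catAdj, fi, Fin.ext_iff] <;> omega
      rw [this]
      rw [Set.ncard_insert_of_notMem (by simp), Set.ncard_pair (by simp [Fin.ext_iff] <;> omega)]
    · -- top j = n - 3
      have hj : j.val = n - 3 := by omega
      have : (catG n).neighborSet (.inr j) =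
          {Sum.inl ⟨n - 2, by omega⟩, Sum.inl ⟨n - 1, by omega⟩,
           Sum.inr ⟨n - 4, by omega⟩} := by
        ext (i | k) <;>
          simp [SimpleGraph.mem_neighborSet, catG, catAdj, fi, Fin.ext_iff, hj] <;> omega
      rw [this]
      rw [Set.ncard_insert_of_notMem (by simp [Fin.ext_iff] <;> omega),
        Set.ncard_pair (by simp)]
  · -- bottom j = 0
    have hj : j.val = 0 := by omega
    have : (catG n).neighborSet (.inr j) =
        {Sum.inl ⟨0, by omega⟩, Sum.inl ⟨1, by omega⟩, Sum.inr ⟨1, by omega⟩} := by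
      ext (i | k) <;>
        simp [SimpleGraph.mem_neighborSet, catG, catAdj, fi, Fin.ext_iff, hj] <;> omega
    rw [this]
    rw [Set.ncard_insert_of_notMem (by simp [Fin.ext_iff] <;> omega), Set.ncard_pair (by simp)]

/-- if a coloring is invariant along edges, it is invariant along walks -/
lemma color_const {V : Type} {G : SimpleGraph V} (c : V → Prop)
    (hc : ∀ u v, G.Adj u v → (c u ↔ c v)) {u v : V} (h : G.Reachable u v) :
    c u ↔ c v := by
  obtain ⟨w⟩ := h
  induction w with
  | nil => rfl
  | cons h p ih => exact (hc _ _ h).trans ih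

def sidx (n : ℕ) : CatV n → ℕ
  | .inl i => fi n i
  | .inr j => j

lemma not_reach_leaf (n : ℕ) {i : Fin n} {j : Fin (n - 2)}
    (hvw : (catG n).Adj (.inl i) (.inr j)) :
    ¬ (catG n \ SimpleGraph.fromEdgeSet {s(Sum.inl i, Sum.inr j)}).Reachable
        (.inl i) (.inr j) := by
  intro hreach
  have key : ∀ u, ¬ (catG n \ SimpleGraph.fromEdgeSet {s(Sum.inl i, Sum.inr j)}).Adj
      (Sum.inl i) u := by
    rintro (i' | k) hu
    · exact hu.1
    · have hk : k = j := by
        have h1 : (k : ℕ) = fi n i := hu.1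
        have h2 : (j : ℕ) = fi n i := hvw
        exact Fin.ext (by omega)
      subst hk
      rw [SimpleGraph.sdiff_adj, SimpleGraph.fromEdgeSet_adj] at hu
      exact hu.2 ⟨rfl, by simp⟩
  have := color_const (fun u => u = Sum.inl i) ?_ hreach
  · simp at this
  · intro u v huv
    constructor
    · rintro rfl; exact absurd huv (key v)
    · rintro rfl; exact absurd huv.symm (key u)

lemma cat_acyclic (n : ℕ) (hn : 4 ≤ n) : (catG n).IsAcyclic := by
  rw [SimpleGraph.isAcyclic_iff_forall_adj_isBridge]
  intro v w hvw
  rw [SimpleGraph.isBridge_iff]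
  show ¬ (catG n \ SimpleGraph.fromEdgeSet {s(v, w)}).Reachable v w
  match v, w, hvw with
  | .inl i, .inr j, hvw => exact not_reach_leaf n hvw
  | .inr j, .inl i, hvw =>
    intro hreach
    refine not_reach_leaf n hvw.symm ?_
    have he : s(Sum.inr j, Sum.inl i) = s(Sum.inl i, (Sum.inr j : CatV n)) := Sym2.eq_swap
    rw [he] at hreach
    exact hreach.symm
  | .inr j, .inr k, hvw =>
    intro hreach
    set m : ℕ := min j.val k.val with hm
    have := color_const (fun u => sidx n u ≤ m) ?_ hreach
    · have hjk : (j:ℕ)+1 = k ∨ (k:ℕ)+1 = j := hvw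
      simp only [sidx] at this
      omega
    · rintro (a | a) (b | b) hadj <;>
        rw [SimpleGraph.sdiff_adj, SimpleGraph.fromEdgeSet_adj] at hadj
      · exact absurd hadj.1 (by exact id)
      · have h1 : (b : ℕ) = fi n a := hadj.1
        simp only [sidx]; omega
      · have h1 : (a : ℕ) = fi n b := hadj.1
        simp only [sidx]; omega
      · have h1 : (a : ℕ) + 1 = b ∨ (b : ℕ) + 1 = a := hadj.1
        have h2 := hadj.2
        simp only [Set.mem_singleton_iff, Sym2.eq_iff, Sum.inr.injEq, ne_eq, not_and,
          not_not] at h2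
        have hjk : (j:ℕ)+1 = k ∨ (k:ℕ)+1 = j := hvw
        simp only [sidx]
        by_cases hset : (a = j ∧ b = k) ∨ (a = k ∧ b = j)
        · exfalso
          have := h2 (by tauto)
          rcases hset with ⟨rfl, rfl⟩ | ⟨rfl, rfl⟩ <;> rw [this] at hjk <;> omega
        · push_neg at hset
          have hne : ¬((a.val = j.val ∧ b.val = k.val) ∨ (a.val = k.val ∧ b.val = j.val)) := by
            simp only [← Fin.ext_iff]; tauto
          omega


lemma reach_spine (n : ℕ) (hn : 4 ≤ n) : ∀ m : ℕ, (hm : m < n - 2) →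
    (catG n).Reachable (.inr ⟨0, by omega⟩) (.inr ⟨m, hm⟩) := by
  intro m
  induction m with
  | zero => intro hm; rfl
  | succ k ih =>
    intro hm
    have hk : k < n - 2 := by omega
    exact (ih hk).trans (SimpleGraph.Adj.reachable (by exact Or.inl rfl))

lemma reach_any (n : ℕ) (hn : 4 ≤ n) (v : CatV n) :
    (catG n).Reachable (.inr ⟨0, by omega⟩) v := by
  cases v with
  | inl i =>
    exact (reach_spine n hn (fi n i.val) (fi_lt n hn i.val)).trans
      (SimpleGraph.Adj.reachable (by exact rfl)).symm
  | inr j =>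
    have := reach_spine n hn j.val j.isLt
    simpa using this

lemma cat_connected (n : ℕ) (hn : 4 ≤ n) : (catG n).Connected := by
  rw [SimpleGraph.connected_iff]
  constructor
  · intro u v
    exact (reach_any n hn u).symm.trans (reach_any n hn v)
  · exact ⟨.inr ⟨0, by omega⟩⟩


lemma concat_isPath {V : Type} {G : SimpleGraph V} {u v w : V} {p : G.Walk u v}
    (hp : p.IsPath) (h : G.Adj v w) (hw : w ∉ p.support) : (p.concat h).IsPath := by
  rw [← SimpleGraph.Walk.isPath_reverse_iff, SimpleGraph.Walk.reverse_concat,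
    SimpleGraph.Walk.cons_isPath_iff]
  exact ⟨hp.reverse, by simpa using hw⟩

def spWalk (n j : ℕ) : (d : ℕ) → (h : j + d < n - 2) →
    (catG n).Walk (.inr ⟨j, by omega⟩) (.inr ⟨j + d, h⟩)
  | 0, _ => SimpleGraph.Walk.nil
  | d+1, h => (spWalk n j d (by omega)).concat
      (show (catG n).Adj (.inr ⟨j + d, by omega⟩) (.inr ⟨j + (d+1), h⟩) from Or.inl rfl)

lemma spWalk_support (n j : ℕ) (d : ℕ) (h : j + d < n - 2) (v : CatV n) :
    v ∈ (spWalk n j d h).support ↔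
      ∃ m : Fin (n - 2), v = .inr m ∧ j ≤ m.val ∧ m.val ≤ j + d := by
  induction d with
  | zero =>
    simp only [spWalk, SimpleGraph.Walk.support_nil, List.mem_singleton]
    constructor
    · rintro rfl; exact ⟨⟨j, by omega⟩, rfl, le_refl _, le_refl _⟩
    · rintro ⟨m, rfl, h1, h2⟩
      have : m = (⟨j, by omega⟩ : Fin (n-2)) := Fin.ext (show m.val = j by omega)
      rw [this]
  | succ d ih =>
    simp only [spWalk, SimpleGraph.Walk.support_concat, List.concat_eq_append,
      List.mem_append, List.mem_singleton]
    rw [ih (by omega)]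
    constructor
    · rintro (⟨m, rfl, h1, h2⟩ | rfl)
      · exact ⟨m, rfl, h1, by omega⟩
      · exact ⟨⟨j + (d+1), h⟩, rfl, by exact Nat.le_add_right j (d+1), le_refl _⟩
    · rintro ⟨m, rfl, h1, h2⟩
      rcases Nat.lt_or_ge m.val (j + (d+1)) with hm | hm
      · exact Or.inl ⟨m, rfl, h1, by omega⟩
      · exact Or.inr (by congr 1; exact Fin.ext (show m.val = j + (d+1) by omega))

lemma spWalk_isPath (n j : ℕ) (d : ℕ) (h : j + d < n - 2) : (spWalk n j d h).IsPath := by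
  induction d with
  | zero => exact SimpleGraph.Walk.IsPath.nil
  | succ d ih =>
    refine concat_isPath (ih (by omega)) _ ?_
    rw [spWalk_support]
    rintro ⟨m, hm, h1, h2⟩
    rw [Sum.inr.injEq] at hm
    rw [← hm] at h2
    simp only [Fin.val_mk] at h2
    omega

/-- the canonical path between spine j and spine k, j ≤ k -/
def spWalk' (n : ℕ) {j k : ℕ} (hjk : j ≤ k) (h : k < n - 2) :
    (catG n).Walk (.inr ⟨j, by omega⟩) (.inr ⟨k, h⟩) :=
  (spWalk n j (k - j) (by omega)).copy rfl (by congr 1; exact Fin.ext (by simp; omega))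

lemma spWalk'_support (n : ℕ) {j k : ℕ} (hjk : j ≤ k) (h : k < n - 2) (v : CatV n) :
    v ∈ (spWalk' n hjk h).support ↔
      ∃ m : Fin (n - 2), v = .inr m ∧ j ≤ m.val ∧ m.val ≤ k := by
  rw [spWalk', SimpleGraph.Walk.support_copy, spWalk_support]
  constructor <;> rintro ⟨m, rfl, h1, h2⟩ <;> exact ⟨m, rfl, h1, by omega⟩

lemma spWalk'_isPath (n : ℕ) {j k : ℕ} (hjk : j ≤ k) (h : k < n - 2) :
    (spWalk' n hjk h).IsPath := by
  rw [spWalk', SimpleGraph.Walk.isPath_copy]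
  exact spWalk_isPath n j (k - j) (by omega)

def lf (n : ℕ) (i : ℕ) (h : i < n) : CatV n := .inl ⟨i, h⟩

/-- the canonical path between leaf i and leaf j for i < j -/
def lfWalk (n : ℕ) (hn : 4 ≤ n) {i j : ℕ} (hij : i < j) (hj : j < n) :
    (catG n).Walk (lf n i (by omega)) (lf n j hj) :=
  SimpleGraph.Walk.cons
    (show (catG n).Adj (lf n i (by omega)) (.inr ⟨fi n i, fi_lt n hn i⟩) from rfl)
    ((spWalk' n (fi_mono n (le_of_lt hij)) (fi_lt n hn j)).concat
      (show (catG n).Adj (.inr ⟨fi n j, fi_lt n hn j⟩) (lf n j hj) from rfl))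

lemma lfWalk_support (n : ℕ) (hn : 4 ≤ n) {i j : ℕ} (hij : i < j) (hj : j < n) (v : CatV n) :
    v ∈ (lfWalk n hn hij hj).support ↔
      v = lf n i (by omega) ∨ v = lf n j hj ∨
        ∃ m : Fin (n - 2), v = .inr m ∧ fi n i ≤ m.val ∧ m.val ≤ fi n j := by
  rw [lfWalk]
  simp only [SimpleGraph.Walk.support_cons, SimpleGraph.Walk.support_concat,
    List.concat_eq_append, List.mem_cons, List.mem_append, List.mem_singleton]
  rw [spWalk'_support]
  simp only [List.mem_cons, List.not_mem_nil, or_false]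
  exact or_congr_right or_comm

lemma lfWalk_isPath (n : ℕ) (hn : 4 ≤ n) {i j : ℕ} (hij : i < j) (hj : j < n) :
    (lfWalk n hn hij hj).IsPath := by
  rw [lfWalk, SimpleGraph.Walk.cons_isPath_iff]
  constructor
  · refine concat_isPath (spWalk'_isPath n _ _) _ ?_
    rw [spWalk'_support]
    rintro ⟨m, hm, -, -⟩
    exact absurd hm (by simp [lf])
  · rw [SimpleGraph.Walk.support_concat, List.mem_append,
      List.mem_singleton]
    rintro (h | h)
    · rw [spWalk'_support] at h
      obtain ⟨m, hm, -, -⟩ := h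
      exact absurd hm (by simp [lf])
    · rw [lf, lf, Sum.inl.injEq] at h
      have : i = j := by
        have := congrArg Fin.val h
        simpa using this
      omega

/-- support of ANY path between leaf i and leaf j (uniqueness via acyclicity) -/
lemma path_support (n : ℕ) (hn : 4 ≤ n) {i j : ℕ} (hij : i ≠ j) (hi : i < n) (hj : j < n)
    (p : (catG n).Walk (lf n i hi) (lf n j hj)) (hp : p.IsPath) (v : CatV n) :
    v ∈ p.support ↔
      v = lf n i hi ∨ v = lf n j hj ∨
        ∃ m : Fin (n - 2), v = .inr m ∧ fi n (min i j) ≤ m.val ∧ m.val ≤ fi n (max i j) := by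
  rcases Nat.lt_or_ge i j with h | h
  · have hu := (cat_acyclic n hn).path_unique ⟨p, hp⟩ ⟨lfWalk n hn h hj, lfWalk_isPath n hn h hj⟩
    have hs : p.support = (lfWalk n hn h hj).support := by
      rw [Subtype.ext_iff] at hu
      simp only at hu
      rw [hu]
    rw [hs, lfWalk_support]
    have h1 : min i j = i := by omega
    have h2 : max i j = j := by omega
    rw [h1, h2]
  · have hji : j < i := by omega
    have hu := (cat_acyclic n hn).path_unique ⟨p.reverse, hp.reverse⟩
      ⟨lfWalk n hn hji hi, lfWalk_isPath n hn hji hi⟩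
    have hs : p.reverse.support = (lfWalk n hn hji hi).support := by
      rw [Subtype.ext_iff] at hu
      simp only at hu
      rw [hu]
    have hmem : v ∈ p.support ↔ v ∈ p.reverse.support := by
      rw [SimpleGraph.Walk.support_reverse, List.mem_reverse]
    rw [hmem, hs, lfWalk_support]
    have h1 : min i j = j := by omega
    have h2 : max i j = i := by omega
    rw [h1, h2]
    tauto

def lfWalk2 (n : ℕ) (hn : 4 ≤ n) {i j : ℕ} (hij : i ≠ j) (hi : i < n) (hj : j < n) :
    (catG n).Walk (lf n i hi) (lf n j hj) :=
  if h : i < j then lfWalk n hn h hj else (lfWalk n hn (show j < i by omega) hi).reverse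

lemma lfWalk2_isPath (n : ℕ) (hn : 4 ≤ n) {i j : ℕ} (hij : i ≠ j) (hi : i < n) (hj : j < n) :
    (lfWalk2 n hn hij hi hj).IsPath := by
  rw [lfWalk2]
  split
  · exact lfWalk_isPath n hn _ hj
  · exact (lfWalk_isPath n hn _ hi).reverse

lemma fi_strict (n : ℕ) {a b : ℕ} (h1 : 1 ≤ a) (h2 : a < b) (h3 : b ≤ n - 2) :
    fi n a < fi n b := by unfold fi; omega

/-- characterization of quartet resolution in the caterpillar -/
lemma resolves_char (n : ℕ) (hn : 4 ≤ n) {i j k l : ℕ}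
    (hi : i < n) (hj : j < n) (hk : k < n) (hl : l < n)
    (hij : i ≠ j) (hik : i ≠ k) (hil : i ≠ l) (hjk : j ≠ k) (hjl : j ≠ l) (hkl : k ≠ l) :
    (∃ (p : (catG n).Walk (lf n i hi) (lf n j hj))
       (q : (catG n).Walk (lf n k hk) (lf n l hl)),
        p.IsPath ∧ q.IsPath ∧ ∀ v ∈ p.support, v ∉ q.support) ↔
      (max i j < min k l ∨ max k l < min i j) := by
  constructor
  · rintro ⟨p, q, hp, hq, hdisj⟩
    by_contra hsep
    push_neg at hsep
    obtain ⟨h1, h2⟩ := hsep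
    -- a common spine vertex
    set m : ℕ := max (fi n (min i j)) (fi n (min k l)) with hm
    have hmlt : m < n - 2 := by
      have := fi_lt n hn (min i j)
      have := fi_lt n hn (min k l)
      omega
    have hp1 : (Sum.inr ⟨m, hmlt⟩ : CatV n) ∈ p.support := by
      rw [path_support n hn hij hi hj p hp]
      refine Or.inr (Or.inr ⟨⟨m, hmlt⟩, rfl, ?_, ?_⟩)
      · simp only [Fin.val_mk]; omega
      · simp only [Fin.val_mk, hm]
        exact max_le (fi_mono n (by omega)) (fi_mono n (by omega))
    have hq1 : (Sum.inr ⟨m, hmlt⟩ : CatV n) ∈ q.support := by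
      rw [path_support n hn hkl hk hl q hq]
      refine Or.inr (Or.inr ⟨⟨m, hmlt⟩, rfl, ?_, ?_⟩)
      · simp only [Fin.val_mk]; omega
      · simp only [Fin.val_mk, hm]
        exact max_le (fi_mono n (by omega)) (fi_mono n (by omega))
    exact hdisj _ hp1 hq1
  · intro hsep
    refine ⟨lfWalk2 n hn hij hi hj, lfWalk2 n hn hkl hk hl,
      lfWalk2_isPath n hn hij hi hj, lfWalk2_isPath n hn hkl hk hl, ?_⟩
    have hfi : fi n (max i j) < fi n (min k l) ∨ fi n (max k l) < fi n (min i j) := by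
      rcases hsep with h | h
      · exact Or.inl (fi_strict n (by omega) h (by omega))
      · exact Or.inr (fi_strict n (by omega) h (by omega))
    intro v hv hv'
    rw [path_support n hn hij hi hj _ (lfWalk2_isPath n hn hij hi hj)] at hv
    rw [path_support n hn hkl hk hl _ (lfWalk2_isPath n hn hkl hk hl)] at hv'
    have leaf_ne : ∀ (a b : ℕ) (ha : a < n) (hb : b < n), a ≠ b → lf n a ha ≠ lf n b hb := by
      intro a b ha hb hab h
      rw [lf, lf, Sum.inl.injEq] at h
      exact hab (by simpa using congrArg Fin.val h)
    rcases hv with rfl | rfl | ⟨m, rfl, hm1, hm2⟩ <;>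
      rcases hv' with h' | h' | ⟨m', hmm, hm1', hm2'⟩
    · exact leaf_ne i k hi hk hik h'
    · exact leaf_ne i l hi hl hil h'
    · exact absurd hmm (by simp [lf])
    · exact leaf_ne j k hj hk hjk h'
    · exact leaf_ne j l hj hl hjl h'
    · exact absurd hmm (by simp [lf])
    · exact absurd h'.symm (by simp [lf])
    · exact absurd h'.symm (by simp [lf])
    · rw [Sum.inr.injEq] at hmm
      rw [← hmm] at hm1' hm2'
      omega

end Cat


section Lists
variable {α : Type} [DecidableEq α]

lemma filter_pair_single {l : List α} {u v : α} (hl : l.Nodup) (hv : v ∈ l) (hu : u ∉ l) :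
    l.filter (fun x => x = u ∨ x = v) = [v] := by
  induction l with
  | nil => simp at hv
  | cons a t ih =>
    rw [List.nodup_cons] at hl
    have hau : a ≠ u := fun h => hu (h ▸ List.mem_cons_self)
    by_cases hav : a = v
    · subst hav
      have hat : t.filter (fun x => x = u ∨ x = a) = [] := by
        rw [List.filter_eq_nil_iff]
        intro x hx
        simp only [decide_eq_true_eq, not_or]
        exact ⟨fun h => hu (h ▸ List.mem_cons_of_mem a hx), fun h => hl.1 (h ▸ hx)⟩
      rw [List.filter_cons, if_pos (by simp), hat]
    · have hvt : v ∈ t := by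
        rcases List.mem_cons.1 hv with h | h
        · exact absurd h.symm hav
        · exact h
      rw [List.filter_cons, if_neg (by simp [hau, hav]
          )]
      exact ih hl.2 hvt (fun h => hu (List.mem_cons_of_mem a h))

lemma filter_pair_eq {l : List α} (hl : l.Nodup) {u v : α} (hu : u ∈ l) (hv : v ∈ l)
    (huv : u ≠ v) :
    (l.idxOf u < l.idxOf v ↔ l.filter (fun x => x = u ∨ x = v) = [u, v]) := by
  induction l with
  | nil => simp at hu
  | cons a t ih =>
    rw [List.nodup_cons] at hl
    by_cases hau : a = u
    · subst hau
      have hvt : v ∈ t := by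
        rcases List.mem_cons.1 hv with h | h
        · exact absurd h.symm huv
        · exact h
      rw [List.idxOf_cons_self, List.idxOf_cons_ne t huv]
      constructor
      · intro _
        have h0 : t.filter (fun x => x = a ∨ x = v) = [v] :=
          filter_pair_single hl.2 hvt hl.1
        rw [List.filter_cons, if_pos (by simp), h0]
      · intro _
        omega
    · by_cases hav : a = v
      · subst hav
        rw [List.idxOf_cons_self, List.idxOf_cons_ne t (show a ≠ u from hau)]
        constructor
        · intro h
          exact absurd h (by omega)
        · intro h
          exfalso
          rw [List.filter_cons, if_pos (by simp)] at h
          injection h with h1 _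
          exact huv h1.symm
      · have hut : u ∈ t := by
          rcases List.mem_cons.1 hu with h | h
          · exact absurd h.symm hau
          · exact h
        have hvt : v ∈ t := by
          rcases List.mem_cons.1 hv with h | h
          · exact absurd h.symm hav
          · exact h
        rw [List.idxOf_cons_ne t (show a ≠ u from hau),
          List.idxOf_cons_ne t (show a ≠ v from hav)]
        rw [List.filter_cons, if_neg (by simp [hau, hav])]
        rw [← ih hl.2 hut hvt]
        omega

lemma idxOf_lt_iff_of_filter_eq {l l' : List α} (hl : l.Nodup) (hl' : l'.Nodup)
    (p : α → Bool) (hf : l.filter p = l'.filter p) {u v : α}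
    (hu : u ∈ l) (hv : v ∈ l) (hu' : u ∈ l') (hv' : v ∈ l')
    (hpu : p u = true) (hpv : p v = true) (huv : u ≠ v) :
    (l.idxOf u < l.idxOf v ↔ l'.idxOf u < l'.idxOf v) := by
  rw [filter_pair_eq hl hu hv huv, filter_pair_eq hl' hu' hv' huv]
  have key : ∀ (m : List α), m.filter (fun x => x = u ∨ x = v) =
      (m.filter p).filter (fun x => x = u ∨ x = v) := by
    intro m
    rw [List.filter_filter]
    apply List.filter_congr
    intro x hx
    by_cases h1 : x = u ∨ x = v
    · rcases h1 with rfl | rfl <;> simp [hpu, hpv]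
    · push_neg at h1
      simp [h1.1, h1.2]
  rw [key l, key l', hf]

end Lists

section CatTree
variable {α : Type} [DecidableEq α]

open Cat

/-- the caterpillar tree on the list of labels L -/
noncomputable def catTree (L : List α) (X : Finset α) (hX : ∀ x, x ∈ L ↔ x ∈ X)
    (hnd : L.Nodup) (hn : 4 ≤ L.length) : PhyloTree X where
  V := CatV L.length
  fintypeV := inferInstance
  G := catG L.length
  connected := cat_connected _ hn
  acyclic := cat_acyclic _ hn
  leaf x := .inl ⟨min (L.idxOf x) (L.length - 1), by omega⟩
  leaf_inj := by
    intro x hx y hy h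
    have hxL : x ∈ L := (hX x).2 hx
    have hyL : y ∈ L := (hX y).2 hy
    have hx1 : L.idxOf x < L.length := List.idxOf_lt_length_iff.2 hxL
    have hy1 : L.idxOf y < L.length := List.idxOf_lt_length_iff.2 hyL
    rw [Sum.inl.injEq, Fin.mk.injEq] at h
    rw [← List.idxOf_inj hxL]
    omega
  leaf_degree := by
    intro x hx
    exact leaf_ncard L.length hn _
  degree_one_is_leaf := by
    rintro (i | j) hv
    · refine ⟨L[i.val], ?_, ?_⟩
      · exact (hX _).1 (List.getElem_mem _)
      · have h2 : L.idxOf (L[i.val]) = i.val := List.Nodup.idxOf_getElem hnd _ _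
        have h3 := i.isLt
        rw [Sum.inl.injEq]
        exact Fin.ext (by simp only [Fin.val_mk, h2]; omega)
    · rw [spine_ncard L.length hn j] at hv
      omega
  internal_degree := by
    rintro (i | j) hv
    · exfalso
      refine hv (L[i.val]) ((hX _).1 (List.getElem_mem _)) ?_
      have h2 : L.idxOf (L[i.val]) = i.val := List.Nodup.idxOf_getElem hnd _ _
      have h3 := i.isLt
      rw [Sum.inl.injEq]
      exact Fin.ext (by simp only [Fin.val_mk, h2]; omega)
    · exact spine_ncard L.length hn j

lemma catTree_leaf (L : List α) (X : Finset α) (hX : ∀ x, x ∈ L ↔ x ∈ X)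
    (hnd : L.Nodup) (hn : 4 ≤ L.length) {x : α} (hx : x ∈ L) :
    (catTree L X hX hnd hn).leaf x =
      Sum.inl ⟨L.idxOf x, List.idxOf_lt_length_iff.2 hx⟩ := by
  have h1 : L.idxOf x < L.length := List.idxOf_lt_length_iff.2 hx
  simp only [catTree, Sum.inl.injEq]
  exact Fin.ext (by simp; omega)

/-- quartet resolution in the caterpillar tree, in terms of positions in L -/
lemma catTree_resolves (L : List α) (X : Finset α) (hX : ∀ x, x ∈ L ↔ x ∈ X)
    (hnd : L.Nodup) (hn : 4 ≤ L.length) {a b c d : α}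
    (ha : a ∈ L) (hb : b ∈ L) (hc : c ∈ L) (hd : d ∈ L)
    (hab : a ≠ b) (hac : a ≠ c) (had : a ≠ d) (hbc : b ≠ c) (hbd : b ≠ d) (hcd : c ≠ d) :
    (catTree L X hX hnd hn).ResolvesAs a b c d ↔
      (max (L.idxOf a) (L.idxOf b) < min (L.idxOf c) (L.idxOf d) ∨
       max (L.idxOf c) (L.idxOf d) < min (L.idxOf a) (L.idxOf b)) := by
  have hia := List.idxOf_lt_length_iff.2 ha
  have hib := List.idxOf_lt_length_iff.2 hb
  have hic := List.idxOf_lt_length_iff.2 hc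
  have hid := List.idxOf_lt_length_iff.2 hd
  have key := resolves_char L.length hn hia hib hic hid
    (fun h => hab ((List.idxOf_inj ha).1 h))
    (fun h => hac ((List.idxOf_inj ha).1 h))
    (fun h => had ((List.idxOf_inj ha).1 h))
    (fun h => hbc ((List.idxOf_inj hb).1 h))
    (fun h => hbd ((List.idxOf_inj hb).1 h))
    (fun h => hcd ((List.idxOf_inj hc).1 h))
  rw [← key]
  unfold PhyloTree.ResolvesAs
  rw [catTree_leaf L X hX hnd hn ha, catTree_leaf L X hX hnd hn hb,
    catTree_leaf L X hX hnd hn hc, catTree_leaf L X hX hnd hn hd]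
  rfl

end CatTree


section Main
variable {α : Type} [DecidableEq α]

lemma card_le_three (x y z : α) : ({x, y, z} : Finset α).card ≤ 3 := by
  apply le_trans (Finset.card_insert_le _ _)
  apply Nat.succ_le_succ
  apply le_trans (Finset.card_insert_le _ _)
  simp

lemma quad_card_distinct {a b c d : α} (h : ({a, b, c, d} : Finset α).card = 4) :
    a ≠ b ∧ a ≠ c ∧ a ≠ d ∧ b ≠ c ∧ b ≠ d ∧ c ≠ d := by
  refine ⟨?_, ?_, ?_, ?_, ?_, ?_⟩ <;> rintro rfl
  · rw [show ({a, a, c, d} : Finset α) = {a, c, d} from by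
      ext t; simp only [Finset.mem_insert, Finset.mem_singleton]; tauto] at h
    have := card_le_three a c d; omega
  · rw [show ({a, b, a, d} : Finset α) = {a, b, d} from by
      ext t; simp only [Finset.mem_insert, Finset.mem_singleton]; tauto] at h
    have := card_le_three a b d; omega
  · rw [show ({a, b, c, a} : Finset α) = {a, b, c} from by
      ext t; simp only [Finset.mem_insert, Finset.mem_singleton]; tauto] at h
    have := card_le_three a b c; omega
  · rw [show ({a, b, b, d} : Finset α) = {a, b, d} from by
      ext t; simp only [Finset.mem_insert, Finset.mem_singleton]; tauto] at h
    have := card_le_three a b d; omega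
  · rw [show ({a, b, c, b} : Finset α) = {a, b, c} from by
      ext t; simp only [Finset.mem_insert, Finset.mem_singleton]; tauto] at h
    have := card_le_three a b c; omega
  · rw [show ({a, b, c, c} : Finset α) = {a, b, c} from by
      ext t; simp only [Finset.mem_insert, Finset.mem_singleton]; tauto] at h
    have := card_le_three a b c; omega

lemma labelIso_resolvesAs {X : Finset α} {T T' : PhyloTree X}
    (h : T.LabelIso T') {a b c d : α} (ha : a ∈ X) (hb : b ∈ X) (hc : c ∈ X) (hd : d ∈ X)
    (hres : T.ResolvesAs a b c d) : T'.ResolvesAs a b c d := by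
  obtain ⟨φ, hφ⟩ := h
  obtain ⟨p, q, hp, hq, hdisj⟩ := hres
  have hinj : Function.Injective (⇑(φ.toHom)) := fun x y hxy => φ.toEquiv.injective hxy
  refine ⟨(p.map φ.toHom).copy (hφ a ha) (hφ b hb),
    (q.map φ.toHom).copy (hφ c hc) (hφ d hd), ?_, ?_, ?_⟩
  · rw [SimpleGraph.Walk.isPath_copy]
    exact SimpleGraph.Walk.map_isPath_of_injective hinj hp
  · rw [SimpleGraph.Walk.isPath_copy]
    exact SimpleGraph.Walk.map_isPath_of_injective hinj hq
  · intro v hv hv'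
    rw [SimpleGraph.Walk.support_copy, SimpleGraph.Walk.support_map] at hv hv'
    obtain ⟨w, hw, rfl⟩ := List.mem_map.1 hv
    obtain ⟨w', hw', heq⟩ := List.mem_map.1 hv'
    exact hdisj w hw (hinj heq ▸ hw')

end Main

section MainProof
variable {α : Type} [DecidableEq α]

theorem not_decisive_pair' (Y1 Y2 : Finset α)
    (hk : 2 ≤ (Y1 ∩ Y2).card)
    (h1 : (Y1 \ Y2).Nonempty) (h2 : (Y2 \ Y1).Nonempty) :
    ¬ PhyloDecisive (Y1 ∪ Y2) ({Y1, Y2} : Set (Finset α)) := by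
  intro hdec
  obtain ⟨a, ha, b, hb, hab⟩ := Finset.one_lt_card.1 (by omega : 1 < (Y1 ∩ Y2).card)
  obtain ⟨x0, hx0⟩ := h1
  obtain ⟨y0, hy0⟩ := h2
  have ha1 : a ∈ Y1 := (Finset.mem_inter.1 ha).1
  have ha2 : a ∈ Y2 := (Finset.mem_inter.1 ha).2
  have hb1 : b ∈ Y1 := (Finset.mem_inter.1 hb).1
  have hb2 : b ∈ Y2 := (Finset.mem_inter.1 hb).2
  have hx01 : x0 ∈ Y1 := (Finset.mem_sdiff.1 hx0).1
  have hx02 : x0 ∉ Y2 := (Finset.mem_sdiff.1 hx0).2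
  have hy02 : y0 ∈ Y2 := (Finset.mem_sdiff.1 hy0).1
  have hy01 : y0 ∉ Y1 := (Finset.mem_sdiff.1 hy0).2
  set LA : List α := (Y1 \ Y2).toList with hLAdef
  set LB : List α := (Y2 \ Y1).toList with hLBdef
  set LC : List α := (((Y1 ∩ Y2).erase a).erase b).toList with hLCdef
  have hLA : ∀ x, x ∈ LA ↔ x ∈ Y1 ∧ x ∉ Y2 := by
    intro x; rw [hLAdef, Finset.mem_toList, Finset.mem_sdiff]
  have hLB : ∀ x, x ∈ LB ↔ x ∈ Y2 ∧ x ∉ Y1 := by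
    intro x; rw [hLBdef, Finset.mem_toList, Finset.mem_sdiff]
  have hLC : ∀ x, x ∈ LC ↔ x ≠ b ∧ x ≠ a ∧ x ∈ Y1 ∧ x ∈ Y2 := by
    intro x
    rw [hLCdef, Finset.mem_toList, Finset.mem_erase, Finset.mem_erase, Finset.mem_inter]
  set L1 : List α := a :: (LA ++ (LB ++ (b :: LC))) with hL1def
  set L2 : List α := a :: (LB ++ (LA ++ (b :: LC))) with hL2def
  have hm1 : ∀ x, x ∈ L1 ↔ x ∈ Y1 ∪ Y2 := by
    intro x
    rw [hL1def]
    simp only [List.mem_cons, List.mem_append, hLA, hLB, hLC, Finset.mem_union]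
    constructor
    · rintro (rfl | ⟨h, -⟩ | ⟨h, -⟩ | rfl | ⟨-, -, h, -⟩) <;> tauto
    · intro h
      by_cases hxa : x = a
      · tauto
      by_cases hxb : x = b
      · tauto
      by_cases hx1 : x ∈ Y1 <;> by_cases hx2 : x ∈ Y2 <;> tauto
  have hm2 : ∀ x, x ∈ L2 ↔ x ∈ Y1 ∪ Y2 := by
    intro x
    rw [hL2def]
    simp only [List.mem_cons, List.mem_append, hLA, hLB, hLC, Finset.mem_union]
    constructor
    · rintro (rfl | ⟨h, -⟩ | ⟨h, -⟩ | rfl | ⟨-, -, h, -⟩) <;> tauto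
    · intro h
      by_cases hxa : x = a
      · tauto
      by_cases hxb : x = b
      · tauto
      by_cases hx1 : x ∈ Y1 <;> by_cases hx2 : x ∈ Y2 <;> tauto
  have hndA : LA.Nodup := Finset.nodup_toList _
  have hndB : LB.Nodup := Finset.nodup_toList _
  have hndC : LC.Nodup := Finset.nodup_toList _
  have hnd1 : L1.Nodup := by
    rw [hL1def, List.nodup_cons]
    constructor
    · simp only [List.mem_append, List.mem_cons, hLA, hLB, hLC]
      rintro (⟨-, h⟩ | ⟨-, h⟩ | rfl | ⟨-, h, -⟩)
      · exact h ha2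
      · exact h ha1
      · exact hab rfl
      · exact h rfl
    · rw [List.nodup_append]
      refine ⟨hndA, ?_, ?_⟩
      · rw [List.nodup_append]
        refine ⟨hndB, ?_, ?_⟩
        · rw [List.nodup_cons]
          exact ⟨fun h => ((hLC b).1 h).1 rfl, hndC⟩
        · intro x hx _ hx2 rfl
          have h1 := (hLB x).1 hx
          rcases List.mem_cons.1 hx2 with rfl | h2
          · exact h1.2 hb1
          · exact h1.2 ((hLC x).1 h2).2.2.1
      · intro x hx _ hx2 rfl
        have h1 := (hLA x).1 hx
        rcases List.mem_append.1 hx2 with h2 | h2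
        · exact h1.2 ((hLB x).1 h2).1
        · rcases List.mem_cons.1 h2 with rfl | h3
          · exact h1.2 hb2
          · exact h1.2 ((hLC x).1 h3).2.2.2
  have hnd2 : L2.Nodup := by
    rw [hL2def, List.nodup_cons]
    constructor
    · simp only [List.mem_append, List.mem_cons, hLA, hLB, hLC]
      rintro (⟨-, h⟩ | ⟨-, h⟩ | rfl | ⟨-, h, -⟩)
      · exact h ha1
      · exact h ha2
      · exact hab rfl
      · exact h rfl
    · rw [List.nodup_append]
      refine ⟨hndB, ?_, ?_⟩
      · rw [List.nodup_append]
        refine ⟨hndA, ?_, ?_⟩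
        · rw [List.nodup_cons]
          exact ⟨fun h => ((hLC b).1 h).1 rfl, hndC⟩
        · intro x hx _ hx2 rfl
          have h1 := (hLA x).1 hx
          rcases List.mem_cons.1 hx2 with rfl | h2
          · exact h1.2 hb2
          · exact h1.2 ((hLC x).1 h2).2.2.2
      · intro x hx _ hx2 rfl
        have h1 := (hLB x).1 hx
        rcases List.mem_append.1 hx2 with h2 | h2
        · exact h1.2 ((hLA x).1 h2).1
        · rcases List.mem_cons.1 h2 with rfl | h3
          · exact h1.2 hb1
          · exact h1.2 ((hLC x).1 h3).2.2.1
  have hx0A : x0 ∈ LA := (hLA x0).2 ⟨hx01, hx02⟩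
  have hy0B : y0 ∈ LB := (hLB y0).2 ⟨hy02, hy01⟩
  have hcardA : 0 < LA.length := List.length_pos_iff.2 (List.ne_nil_of_mem hx0A)
  have hcardB : 0 < LB.length := List.length_pos_iff.2 (List.ne_nil_of_mem hy0B)
  have hlen1 : L1.length = 1 + (LA.length + (LB.length + (1 + LC.length))) := by
    simp [hL1def]; omega
  have hlen2 : L2.length = 1 + (LB.length + (LA.length + (1 + LC.length))) := by
    simp [hL2def]; omega
  have hn1 : 4 ≤ L1.length := by omega
  have hn2 : 4 ≤ L2.length := by omega
  set T1 : PhyloTree (Y1 ∪ Y2) := catTree L1 (Y1 ∪ Y2) hm1 hnd1 hn1 with hT1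
  set T2 : PhyloTree (Y1 ∪ Y2) := catTree L2 (Y1 ∪ Y2) hm2 hnd2 hn2 with hT2
  -- distinctness
  have hax0 : a ≠ x0 := fun h => hx02 (h ▸ ha2)
  have hay0 : a ≠ y0 := fun h => hy01 (h ▸ ha1)
  have hx0y0 : x0 ≠ y0 := fun h => hy01 (h ▸ hx01)
  have hx0b : x0 ≠ b := fun h => hx02 (h ▸ hb2)
  have hy0b : y0 ≠ b := fun h => hy01 (h ▸ hb1)
  -- memberships in X
  have hXa : a ∈ Y1 ∪ Y2 := Finset.mem_union_left _ ha1
  have hXb : b ∈ Y1 ∪ Y2 := Finset.mem_union_left _ hb1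
  have hXx0 : x0 ∈ Y1 ∪ Y2 := Finset.mem_union_left _ hx01
  have hXy0 : y0 ∈ Y1 ∪ Y2 := Finset.mem_union_right _ hy02
  -- index computations in L1
  have i1a : L1.idxOf a = 0 := by rw [hL1def]; exact List.idxOf_cons_self
  have i1x0 : L1.idxOf x0 = LA.idxOf x0 + 1 := by
    rw [hL1def, List.idxOf_cons_ne _ hax0, List.idxOf_append_of_mem hx0A]
  have hy0nA : y0 ∉ LA := fun h => hy01 ((hLA y0).1 h).1
  have hbnA : b ∉ LA := fun h => ((hLA b).1 h).2 hb2
  have hbnB : b ∉ LB := fun h => ((hLB b).1 h).2 hb1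
  have hx0nB : x0 ∉ LB := fun h => hx02 ((hLB x0).1 h).1
  have i1y0 : L1.idxOf y0 = LA.length + LB.idxOf y0 + 1 := by
    rw [hL1def, List.idxOf_cons_ne _ hay0, List.idxOf_append_of_notMem hy0nA,
      List.idxOf_append_of_mem hy0B]
  have i1b : L1.idxOf b = LA.length + LB.length + 1 := by
    rw [hL1def, List.idxOf_cons_ne _ hab, List.idxOf_append_of_notMem hbnA,
      List.idxOf_append_of_notMem hbnB, List.idxOf_cons_self]
    omega
  -- index computations in L2
  have i2a : L2.idxOf a = 0 := by rw [hL2def]; exact List.idxOf_cons_self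
  have i2y0 : L2.idxOf y0 = LB.idxOf y0 + 1 := by
    rw [hL2def, List.idxOf_cons_ne _ hay0, List.idxOf_append_of_mem hy0B]
  have i2x0 : L2.idxOf x0 = LB.length + LA.idxOf x0 + 1 := by
    rw [hL2def, List.idxOf_cons_ne _ hax0, List.idxOf_append_of_notMem hx0nB,
      List.idxOf_append_of_mem hx0A]
  have i2b : L2.idxOf b = LB.length + LA.length + 1 := by
    rw [hL2def, List.idxOf_cons_ne _ hab, List.idxOf_append_of_notMem hbnB,
      List.idxOf_append_of_notMem hbnA, List.idxOf_cons_self]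
    omega
  have hidxA : LA.idxOf x0 < LA.length := List.idxOf_lt_length_iff.2 hx0A
  have hidxB : LB.idxOf y0 < LB.length := List.idxOf_lt_length_iff.2 hy0B
  -- apply decisiveness
  have hiso : T1.LabelIso T2 := by
    apply hdec
    intro q hq
    obtain ⟨hcard, Y, hY, hsub⟩ := hq
    intro a' b' c' d' heq
    subst heq
    obtain ⟨n1, n2, n3, n4, n5, n6⟩ := quad_card_distinct hcard
    have ha' : a' ∈ Y := hsub (Finset.mem_insert_self _ _)
    have hb' : b' ∈ Y := hsub (by simp)
    have hc' : c' ∈ Y := hsub (by simp)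
    have hd' : d' ∈ Y := hsub (by simp)
    simp only [Set.mem_insert_iff, Set.mem_singleton_iff] at hY
    rcases hY with h | h
    · rw [h] at ha' hb' hc' hd'
      have hfilter : L1.filter (fun x => decide (x ∈ Y1)) =
          L2.filter (fun x => decide (x ∈ Y1)) := by
        have eA : LA.filter (fun x => decide (x ∈ Y1)) = LA :=
          List.filter_eq_self.2 (fun x hx => by simp [((hLA x).1 hx).1])
        have eB : LB.filter (fun x => decide (x ∈ Y1)) = [] :=
          List.filter_eq_nil_iff.2 (fun x hx => by simp [((hLB x).1 hx).2])
        have eC : LC.filter (fun x => decide (x ∈ Y1)) = LC :=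
          List.filter_eq_self.2 (fun x hx => by simp [((hLC x).1 hx).2.2.1])
        rw [hL1def, hL2def]
        simp only [List.filter_cons, List.filter_append, eA, eB, eC]
        simp [ha1, hb1]
      have mL1 : ∀ x, x ∈ Y1 → x ∈ L1 := fun x hx => (hm1 x).2 (Finset.mem_union_left _ hx)
      have mL2 : ∀ x, x ∈ Y1 → x ∈ L2 := fun x hx => (hm2 x).2 (Finset.mem_union_left _ hx)
      have key : ∀ u v, u ∈ Y1 → v ∈ Y1 → u ≠ v →
          (L1.idxOf u < L1.idxOf v ↔ L2.idxOf u < L2.idxOf v) := by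
        intro u v hu hv huv
        exact idxOf_lt_iff_of_filter_eq hnd1 hnd2 (fun x => decide (x ∈ Y1)) hfilter
          (mL1 u hu) (mL1 v hv) (mL2 u hu) (mL2 v hv) (by simp [hu]) (by simp [hv]) huv
      rw [hT1, hT2, catTree_resolves L1 (Y1 ∪ Y2) hm1 hnd1 hn1 (mL1 a' ha') (mL1 b' hb')
          (mL1 c' hc') (mL1 d' hd') n1 n2 n3 n4 n5 n6,
        catTree_resolves L2 (Y1 ∪ Y2) hm2 hnd2 hn2 (mL2 a' ha') (mL2 b' hb')
          (mL2 c' hc') (mL2 d' hd') n1 n2 n3 n4 n5 n6]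
      have o1 := key a' b' ha' hb' n1
      have o2 := key a' c' ha' hc' n2
      have o3 := key a' d' ha' hd' n3
      have o4 := key b' c' hb' hc' n4
      have o5 := key b' d' hb' hd' n5
      have o6 := key c' d' hc' hd' n6
      have r1 := key b' a' hb' ha' n1.symm
      have r2 := key c' a' hc' ha' n2.symm
      have r3 := key d' a' hd' ha' n3.symm
      have r4 := key c' b' hc' hb' n4.symm
      have r5 := key d' b' hd' hb' n5.symm
      have r6 := key d' c' hd' hc' n6.symm
      omega
    · rw [h] at ha' hb' hc' hd'
      have hfilter : L1.filter (fun x => decide (x ∈ Y2)) =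
          L2.filter (fun x => decide (x ∈ Y2)) := by
        have eA : LA.filter (fun x => decide (x ∈ Y2)) = [] :=
          List.filter_eq_nil_iff.2 (fun x hx => by simp [((hLA x).1 hx).2])
        have eB : LB.filter (fun x => decide (x ∈ Y2)) = LB :=
          List.filter_eq_self.2 (fun x hx => by simp [((hLB x).1 hx).1])
        have eC : LC.filter (fun x => decide (x ∈ Y2)) = LC :=
          List.filter_eq_self.2 (fun x hx => by simp [((hLC x).1 hx).2.2.2])
        rw [hL1def, hL2def]
        simp only [List.filter_cons, List.filter_append, eA, eB, eC]
        simp [ha2, hb2]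
      have mL1 : ∀ x, x ∈ Y2 → x ∈ L1 := fun x hx => (hm1 x).2 (Finset.mem_union_right _ hx)
      have mL2 : ∀ x, x ∈ Y2 → x ∈ L2 := fun x hx => (hm2 x).2 (Finset.mem_union_right _ hx)
      have key : ∀ u v, u ∈ Y2 → v ∈ Y2 → u ≠ v →
          (L1.idxOf u < L1.idxOf v ↔ L2.idxOf u < L2.idxOf v) := by
        intro u v hu hv huv
        exact idxOf_lt_iff_of_filter_eq hnd1 hnd2 (fun x => decide (x ∈ Y2)) hfilter
          (mL1 u hu) (mL1 v hv) (mL2 u hu) (mL2 v hv) (by simp [hu]) (by simp [hv]) huv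
      rw [hT1, hT2, catTree_resolves L1 (Y1 ∪ Y2) hm1 hnd1 hn1 (mL1 a' ha') (mL1 b' hb')
          (mL1 c' hc') (mL1 d' hd') n1 n2 n3 n4 n5 n6,
        catTree_resolves L2 (Y1 ∪ Y2) hm2 hnd2 hn2 (mL2 a' ha') (mL2 b' hb')
          (mL2 c' hc') (mL2 d' hd') n1 n2 n3 n4 n5 n6]
      have o1 := key a' b' ha' hb' n1
      have o2 := key a' c' ha' hc' n2
      have o3 := key a' d' ha' hd' n3
      have o4 := key b' c' hb' hc' n4
      have o5 := key b' d' hb' hd' n5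
      have o6 := key c' d' hc' hd' n6
      have r1 := key b' a' hb' ha' n1.symm
      have r2 := key c' a' hc' ha' n2.symm
      have r3 := key d' a' hd' ha' n3.symm
      have r4 := key c' b' hc' hb' n4.symm
      have r5 := key d' b' hd' hb' n5.symm
      have r6 := key d' c' hd' hc' n6.symm
      omega
  -- the contradiction quartet
  have hres1 : T1.ResolvesAs a x0 y0 b := by
    rw [hT1, catTree_resolves L1 (Y1 ∪ Y2) hm1 hnd1 hn1 ((hm1 a).2 hXa) ((hm1 x0).2 hXx0)
      ((hm1 y0).2 hXy0) ((hm1 b).2 hXb) hax0 hay0 hab hx0y0 hx0b hy0b]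
    omega
  have hres2 : ¬ T2.ResolvesAs a x0 y0 b := by
    rw [hT2, catTree_resolves L2 (Y1 ∪ Y2) hm2 hnd2 hn2 ((hm2 a).2 hXa) ((hm2 x0).2 hXx0)
      ((hm2 y0).2 hXy0) ((hm2 b).2 hXb) hax0 hay0 hab hx0y0 hx0b hy0b]
    omega
  exact hres2 (labelIso_resolvesAs hiso hXa hXx0 hXy0 hXb hres1)

end MainProof

/-- if `Y1 − Y2` and `Y2 − Y1` are nonempty and `|Y1 ∩ Y2| ≥ 2`, then
`{Y1, Y2}` is not phylogenetically decisive for `X = Y1 ∪ Y2`. -/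
theorem not_decisive_pair {α : Type} [DecidableEq α]
    (Y1 Y2 : Finset α)
    (hk : 2 ≤ (Y1 ∩ Y2).card)
    (h1 : (Y1 \ Y2).Nonempty) (h2 : (Y2 \ Y1).Nonempty) :
    ¬ PhyloDecisive (Y1 ∪ Y2) ({Y1, Y2} : Set (Finset α)) := by
  exact not_decisive_pair' Y1 Y2 hk h1 h2
end
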